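/- arXiv:2510.17343 — 5 statements merged into one kernel-verified Lean document; each statement's English description precedes it below -/
import Mathlib

section
/- Lemma 4.1, direct part: let ν be a nonzero σ-finite Borel measure on (0,∞) with ∫_{(0,∞)} min(x,1) ν(dx) < ∞, and define Φ(t) = ∫_{(0,∞)} (1 − exp(−t(1 − e^{−x}))) ν(dx) for t > 0. Let c > 0. If for every λ > 0, lim_{t→∞} (Φ(λt) − Φ(t)) = c·log λ, then for every integer r ≥ 1, lim_{t→∞} (−1)^{r+1} t^r Φ^{(r)}(t) = c·(r−1)!, where Φ^{(r)} denotes the r-th derivative of Φ. -/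
open Filter MeasureTheory


private lemma sandwich_aux (G H : ℝ → ℝ) (hH : Antitone H)
    (hG : ∀ t, HasDerivAt G (-(H t)) t) {t s : ℝ} (hts : t < s) :
    (s - t) * H s ≤ G t - G s ∧ G t - G s ≤ (s - t) * H t := by
  obtain ⟨ξ, hξ, hslope⟩ := exists_hasDerivAt_eq_slope G (fun u => -(H u)) hts
    (fun u _ => (hG u).continuousAt.continuousWithinAt) (fun u _ => hG u)
  have hst : (0:ℝ) < s - t := by linarith
  have hGe : G t - G s = (s - t) * H ξ := by
    have := hslope
    field_simp at this
    linarith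
  have h1 : H s ≤ H ξ := hH hξ.2.le
  have h2 : H ξ ≤ H t := hH hξ.1.le
  constructor
  · rw [hGe]; nlinarith
  · rw [hGe]; nlinarith

private lemma key_aux (G H : ℝ → ℝ) (hH : Antitone H)
    (hG : ∀ t, HasDerivAt G (-(H t)) t) (r : ℕ) (A : ℝ → ℝ) (L : ℝ)
    (hA : ∀ l : ℝ, 1 < l →
      Tendsto (fun t => t ^ r * (G t - G (l * t))) atTop (nhds (A l)))
    (h1 : Tendsto (fun l => A l / (l - 1)) (nhdsWithin 1 (Set.Ioi 1)) (nhds L))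
    (h2 : Tendsto (fun l => l ^ (r + 1) * (A l / (l - 1)))
      (nhdsWithin 1 (Set.Ioi 1)) (nhds L)) :
    Tendsto (fun t => t ^ (r + 1) * H t) atTop (nhds L) := by
  rw [tendsto_order]
  constructor
  · intro b hb
    obtain ⟨l, hbl, hl1⟩ :=
      ((h1.eventually (eventually_gt_nhds hb)).and self_mem_nhdsWithin).exists
    have hl0 : (0:ℝ) < l - 1 := by linarith
    have hbA : b * (l - 1) < A l := by
      rw [← lt_div_iff₀ hl0]; exact hbl
    have ev : ∀ᶠ t in atTop, b * (l - 1) < t ^ r * (G t - G (l * t)) :=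
      (hA l hl1).eventually (eventually_gt_nhds hbA)
    filter_upwards [ev, eventually_gt_atTop (0:ℝ)] with t hev ht
    have hts : t < l * t := by nlinarith
    have hs := (sandwich_aux G H hH hG hts).2
    have htr : (0:ℝ) < t ^ r := pow_pos ht r
    have : t ^ r * (G t - G (l * t)) ≤ (l - 1) * (t ^ (r + 1) * H t) := by
      have : (l * t - t) * H t = (l - 1) * (t * H t) := by ring
      calc t ^ r * (G t - G (l * t)) ≤ t ^ r * ((l * t - t) * H t) := by
            exact mul_le_mul_of_nonneg_left hs htr.le
        _ = (l - 1) * (t ^ (r + 1) * H t) := by ring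
    nlinarith
  · intro b hb
    obtain ⟨l, hbl, hl1⟩ :=
      ((h2.eventually (eventually_lt_nhds hb)).and self_mem_nhdsWithin).exists
    have hl0 : (0:ℝ) < l - 1 := by linarith
    have hlpos : (0:ℝ) < l := by linarith
    have hAb : l ^ (r + 1) * A l < b * (l - 1) := by
      calc l ^ (r+1) * A l = (l ^ (r+1) * (A l / (l-1))) * (l-1) := by field_simp
        _ < b * (l - 1) := mul_lt_mul_of_pos_right hbl hl0
    have evt : Tendsto (fun t => l ^ (r+1) * (t ^ r * (G t - G (l * t)))) atTop
        (nhds (l ^ (r+1) * A l)) := (hA l hl1).const_mul _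
    have ev : ∀ᶠ t in atTop, l ^ (r+1) * (t ^ r * (G t - G (l * t))) < b * (l - 1) :=
      evt.eventually (eventually_lt_nhds hAb)
    have ev2 : ∀ᶠ t in atTop, (l * t) ^ (r + 1) * H (l * t) < b := by
      filter_upwards [ev, eventually_gt_atTop (0:ℝ)] with t hev ht
      have hts : t < l * t := by nlinarith
      have hs := (sandwich_aux G H hH hG hts).1
      have htr : (0:ℝ) < t ^ r := pow_pos ht r
      have hlr : (0:ℝ) < l ^ (r+1) := pow_pos hlpos _
      have h3 : (l - 1) * (t ^ (r+1) * H (l * t)) ≤ t ^ r * (G t - G (l * t)) := by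
        calc (l - 1) * (t ^ (r+1) * H (l * t)) = t ^ r * ((l * t - t) * H (l * t)) := by ring
          _ ≤ t ^ r * (G t - G (l * t)) := mul_le_mul_of_nonneg_left hs htr.le
      have h4 : l ^ (r+1) * ((l - 1) * (t ^ (r+1) * H (l * t))) < b * (l - 1) :=
        lt_of_le_of_lt (mul_le_mul_of_nonneg_left h3 hlr.le) hev
      have h5 : (l * t) ^ (r+1) * H (l * t) * (l - 1) < b * (l - 1) := by
        calc (l * t) ^ (r+1) * H (l * t) * (l - 1)
            = l ^ (r+1) * ((l - 1) * (t ^ (r+1) * H (l * t))) := by rw [mul_pow]; ring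
          _ < b * (l - 1) := h4
      exact lt_of_mul_lt_mul_right (by linarith [h5]) hl0.le
    have hcomp : Tendsto (fun s : ℝ => s / l) atTop atTop :=
      tendsto_id.atTop_div_const hlpos
    filter_upwards [hcomp.eventually ev2] with s hs
    rwa [mul_div_cancel₀ s (ne_of_gt hlpos)] at hs


private noncomputable def Faux (ν : Measure ℝ) (r : ℕ) (t : ℝ) : ℝ :=
  ∫ x in Set.Ioi (0:ℝ), (1 - Real.exp (-x)) ^ r * Real.exp (-t * (1 - Real.exp (-x))) ∂ν

private lemma g_nonneg {x : ℝ} (hx : 0 < x) : 0 ≤ 1 - Real.exp (-x) := by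
  have : Real.exp (-x) ≤ 1 := Real.exp_le_one_iff.2 (by linarith)
  linarith

private lemma g_le_one (x : ℝ) : 1 - Real.exp (-x) ≤ 1 := by
  have := (Real.exp_pos (-x)).le; linarith

private lemma g_le_min {x : ℝ} (hx : 0 < x) : 1 - Real.exp (-x) ≤ min x 1 := by
  refine le_min ?_ (g_le_one x)
  have := Real.add_one_le_exp (-x); linarith

private lemma min_nonneg' {x : ℝ} (hx : 0 < x) : 0 ≤ min x 1 := le_min hx.le one_pos.le

private lemma integrable_min (ν : Measure ℝ)
    (hint : ∫⁻ x in Set.Ioi (0 : ℝ), ENNReal.ofReal (min x 1) ∂ν < ⊤) :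
    Integrable (fun x => min x 1) (ν.restrict (Set.Ioi 0)) := by
  refine ⟨(continuous_id.min continuous_const).aestronglyMeasurable, ?_⟩
  rw [hasFiniteIntegral_iff_norm]
  have heq : ∀ᵐ x ∂ν.restrict (Set.Ioi 0),
      ENNReal.ofReal ‖min x 1‖ = ENNReal.ofReal (min x 1) := by
    rw [ae_restrict_iff' measurableSet_Ioi]
    filter_upwards with x hx
    rw [Real.norm_of_nonneg (min_nonneg' hx)]
  rwa [lintegral_congr_ae heq]

private lemma abs_one_sub_exp_le (v : ℝ) : |1 - Real.exp v| ≤ |v| * Real.exp |v| := by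
  have hmul : Real.exp (-|v|) * Real.exp |v| = 1 := by rw [← Real.exp_add]; simp
  rw [abs_le]
  constructor
  · have h1 : Real.exp v ≤ Real.exp |v| := Real.exp_le_exp.2 (le_abs_self v)
    nlinarith [Real.add_one_le_exp (-|v|), Real.exp_pos (|v|), abs_nonneg v]
  · nlinarith [Real.add_one_le_exp v, neg_le_abs v, Real.one_le_exp (abs_nonneg v), abs_nonneg v]

private lemma bound_a {x s M : ℝ} (hx : 0 < x) (hs : |s| ≤ M) {k : ℕ} (hk : k ≠ 0) :
    ‖(1 - Real.exp (-x)) ^ k * Real.exp (-s * (1 - Real.exp (-x)))‖ ≤ min x 1 * Real.exp M := by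
  set g := 1 - Real.exp (-x) with hg
  have hg0 : 0 ≤ g := g_nonneg hx
  have hg1 : g ≤ 1 := g_le_one x
  have hgm : g ≤ min x 1 := g_le_min hx
  have h1 : g ^ k ≤ min x 1 := le_trans (pow_le_of_le_one hg0 hg1 hk) hgm
  have h2 : Real.exp (-s * g) ≤ Real.exp M := by
    apply Real.exp_le_exp.2
    nlinarith [neg_le_abs s, abs_nonneg s]
  rw [Real.norm_of_nonneg (mul_nonneg (pow_nonneg hg0 k) (Real.exp_pos _).le)]
  exact mul_le_mul h1 h2 (Real.exp_pos _).le (min_nonneg' hx)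

private lemma bound_b {x s M : ℝ} (hx : 0 < x) (hs : |s| ≤ M) :
    ‖1 - Real.exp (-s * (1 - Real.exp (-x)))‖ ≤ min x 1 * (M * Real.exp M) := by
  set g := 1 - Real.exp (-x) with hg
  have hg0 : 0 ≤ g := g_nonneg hx
  have hg1 : g ≤ 1 := g_le_one x
  have hgm : g ≤ min x 1 := g_le_min hx
  have hM0 : 0 ≤ M := le_trans (abs_nonneg s) hs
  have h := abs_one_sub_exp_le (-s * g)
  have habs : |(-s * g)| = |s| * g := by rw [abs_mul, abs_neg, abs_of_nonneg hg0]
  have h2 : |(-s * g)| ≤ M := by rw [habs]; nlinarith [abs_nonneg s]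
  have h3 : Real.exp |(-s * g)| ≤ Real.exp M := Real.exp_le_exp.2 h2
  rw [habs] at h3
  rw [Real.norm_eq_abs]
  calc |1 - Real.exp (-s * g)| ≤ |(-s * g)| * Real.exp |(-s * g)| := h
    _ ≤ (|s| * g) * Real.exp M := by
        rw [habs]
        exact mul_le_mul_of_nonneg_left h3 (by positivity)
    _ ≤ (M * min x 1) * Real.exp M := by
        have : |s| * g ≤ M * min x 1 := by nlinarith [abs_nonneg s, min_nonneg' hx]
        exact mul_le_mul_of_nonneg_right this (Real.exp_pos _).le
    _ = min x 1 * (M * Real.exp M) := by ring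

private lemma cont_integrand (k : ℕ) (s : ℝ) :
    Continuous (fun x : ℝ => (1 - Real.exp (-x)) ^ k * Real.exp (-s * (1 - Real.exp (-x)))) := by
  fun_prop

private lemma hasDerivAt_Faux (ν : Measure ℝ)
    (hint : ∫⁻ x in Set.Ioi (0 : ℝ), ENNReal.ofReal (min x 1) ∂ν < ⊤)
    (r : ℕ) (hr : 1 ≤ r) (t₀ : ℝ) :
    HasDerivAt (Faux ν r) (-(Faux ν (r+1) t₀)) t₀ := by
  have hMball : ∀ t ∈ Metric.ball t₀ 1, |t| ≤ |t₀| + 1 := by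
    intro t ht
    rw [Metric.mem_ball, Real.dist_eq] at ht
    calc |t| = |t₀ + (t - t₀)| := by ring_nf
      _ ≤ |t₀| + |t - t₀| := abs_add_le _ _
      _ ≤ |t₀| + 1 := by linarith
  have hFint : Integrable
      (fun x => (1 - Real.exp (-x)) ^ r * Real.exp (-t₀ * (1 - Real.exp (-x))))
      (ν.restrict (Set.Ioi 0)) := by
    refine (integrable_min ν hint |>.mul_const (Real.exp (|t₀| + 1))).mono
      ((cont_integrand r t₀).aestronglyMeasurable) ?_
    rw [ae_restrict_iff' measurableSet_Ioi]
    filter_upwards with x hx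
    have := bound_a (s := t₀) (M := |t₀| + 1) hx (by linarith [abs_nonneg t₀]) (by omega : r ≠ 0)
    calc ‖(1 - Real.exp (-x)) ^ r * Real.exp (-t₀ * (1 - Real.exp (-x)))‖
        ≤ min x 1 * Real.exp (|t₀| + 1) := this
      _ ≤ ‖min x 1 * Real.exp (|t₀| + 1)‖ := le_abs_self _
  have hbound : ∀ᵐ x ∂ν.restrict (Set.Ioi 0), ∀ t ∈ Metric.ball t₀ 1,
      ‖-((1 - Real.exp (-x)) ^ (r+1) * Real.exp (-t * (1 - Real.exp (-x))))‖
        ≤ min x 1 * Real.exp (|t₀| + 1) := by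
    rw [ae_restrict_iff' measurableSet_Ioi]
    filter_upwards with x hx
    intro t ht
    rw [norm_neg]
    exact bound_a hx (hMball t ht) (by omega : r + 1 ≠ 0)
  have hdiff : ∀ᵐ x ∂ν.restrict (Set.Ioi 0), ∀ t ∈ Metric.ball t₀ 1,
      HasDerivAt (fun t => (1 - Real.exp (-x)) ^ r * Real.exp (-t * (1 - Real.exp (-x))))
        (-((1 - Real.exp (-x)) ^ (r+1) * Real.exp (-t * (1 - Real.exp (-x))))) t := by
    rw [ae_restrict_iff' measurableSet_Ioi]
    filter_upwards with x hx
    intro t ht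
    set g := 1 - Real.exp (-x) with hgdef
    have h0 : HasDerivAt (fun t : ℝ => -t * g) (-g) t := by
      simpa using ((hasDerivAt_id t).neg.mul_const g)
    have h1 : HasDerivAt (fun t : ℝ => Real.exp (-t * g)) (Real.exp (-t * g) * -g) t := h0.exp
    have h2 := h1.const_mul (g ^ r)
    exact h2.congr_deriv (by ring)
  obtain ⟨hint', hD⟩ := hasDerivAt_integral_of_dominated_loc_of_deriv_le
    (μ := ν.restrict (Set.Ioi 0))
    (F := fun t x => (1 - Real.exp (-x)) ^ r * Real.exp (-t * (1 - Real.exp (-x))))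
    (F' := fun t x => -((1 - Real.exp (-x)) ^ (r+1) * Real.exp (-t * (1 - Real.exp (-x)))))
    (x₀ := t₀) (bound := fun x => min x 1 * Real.exp (|t₀| + 1)) (s := Metric.ball t₀ 1) (Metric.ball_mem_nhds t₀ one_pos)
    (Eventually.of_forall fun t => (cont_integrand r t).aestronglyMeasurable)
    hFint ((cont_integrand (r+1) t₀).neg.aestronglyMeasurable) hbound
    ((integrable_min ν hint).mul_const _) hdiff
  have hFeq : Faux ν (r+1) t₀ =
      ∫ x in Set.Ioi (0:ℝ), (1 - Real.exp (-x)) ^ (r+1) * Real.exp (-t₀ * (1 - Real.exp (-x))) ∂ν := rfl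
  rw [hFeq]
  have hneg : (∫ x in Set.Ioi (0:ℝ),
      -((1 - Real.exp (-x)) ^ (r+1) * Real.exp (-t₀ * (1 - Real.exp (-x)))) ∂ν)
      = -∫ x in Set.Ioi (0:ℝ),
      (1 - Real.exp (-x)) ^ (r+1) * Real.exp (-t₀ * (1 - Real.exp (-x))) ∂ν :=
    integral_neg _
  rw [← hneg]
  exact hD

private lemma hasDerivAt_Phi (ν : Measure ℝ)
    (hint : ∫⁻ x in Set.Ioi (0 : ℝ), ENNReal.ofReal (min x 1) ∂ν < ⊤) (t₀ : ℝ) :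
    HasDerivAt (fun t => ∫ x in Set.Ioi (0:ℝ), (1 - Real.exp (-t * (1 - Real.exp (-x)))) ∂ν)
      (Faux ν 1 t₀) t₀ := by
  have hMball : ∀ t ∈ Metric.ball t₀ 1, |t| ≤ |t₀| + 1 := by
    intro t ht
    rw [Metric.mem_ball, Real.dist_eq] at ht
    calc |t| = |t₀ + (t - t₀)| := by ring_nf
      _ ≤ |t₀| + |t - t₀| := abs_add_le _ _
      _ ≤ |t₀| + 1 := by linarith
  have hM1 : (1:ℝ) ≤ |t₀| + 1 := by linarith [abs_nonneg t₀]
  have hFint : Integrable (fun x => 1 - Real.exp (-t₀ * (1 - Real.exp (-x))))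
      (ν.restrict (Set.Ioi 0)) := by
    have hcont : Continuous (fun x : ℝ => 1 - Real.exp (-t₀ * (1 - Real.exp (-x)))) := by fun_prop
    refine ((integrable_min ν hint).mul_const ((|t₀| + 1) * Real.exp (|t₀| + 1))).mono
      hcont.aestronglyMeasurable ?_
    rw [ae_restrict_iff' measurableSet_Ioi]
    filter_upwards with x hx
    calc ‖1 - Real.exp (-t₀ * (1 - Real.exp (-x)))‖
        ≤ min x 1 * ((|t₀| + 1) * Real.exp (|t₀| + 1)) :=
          bound_b hx (by linarith [abs_nonneg t₀])
      _ ≤ ‖min x 1 * ((|t₀| + 1) * Real.exp (|t₀| + 1))‖ := le_abs_self _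
  have hbound : ∀ᵐ x ∂ν.restrict (Set.Ioi 0), ∀ t ∈ Metric.ball t₀ 1,
      ‖(1 - Real.exp (-x)) ^ 1 * Real.exp (-t * (1 - Real.exp (-x)))‖
        ≤ min x 1 * ((|t₀| + 1) * Real.exp (|t₀| + 1)) := by
    rw [ae_restrict_iff' measurableSet_Ioi]
    filter_upwards with x hx
    intro t ht
    calc ‖(1 - Real.exp (-x)) ^ 1 * Real.exp (-t * (1 - Real.exp (-x)))‖
        ≤ min x 1 * Real.exp (|t₀| + 1) := bound_a hx (hMball t ht) one_ne_zero
      _ ≤ min x 1 * ((|t₀| + 1) * Real.exp (|t₀| + 1)) :=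
          mul_le_mul_of_nonneg_left
            (le_mul_of_one_le_left (Real.exp_pos _).le hM1) (min_nonneg' hx)
  have hdiff : ∀ᵐ x ∂ν.restrict (Set.Ioi 0), ∀ t ∈ Metric.ball t₀ 1,
      HasDerivAt (fun t => 1 - Real.exp (-t * (1 - Real.exp (-x))))
        ((1 - Real.exp (-x)) ^ 1 * Real.exp (-t * (1 - Real.exp (-x)))) t := by
    rw [ae_restrict_iff' measurableSet_Ioi]
    filter_upwards with x hx
    intro t ht
    set g := 1 - Real.exp (-x) with hgdef
    have h0 : HasDerivAt (fun t : ℝ => -t * g) (-g) t := by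
      simpa using ((hasDerivAt_id t).neg.mul_const g)
    have h1 : HasDerivAt (fun t : ℝ => Real.exp (-t * g)) (Real.exp (-t * g) * -g) t := h0.exp
    have h2 := h1.const_sub 1
    exact h2.congr_deriv (by ring)
  obtain ⟨hint', hD⟩ := hasDerivAt_integral_of_dominated_loc_of_deriv_le
    (μ := ν.restrict (Set.Ioi 0))
    (F := fun t x => 1 - Real.exp (-t * (1 - Real.exp (-x))))
    (F' := fun t x => (1 - Real.exp (-x)) ^ 1 * Real.exp (-t * (1 - Real.exp (-x))))
    (x₀ := t₀) (bound := fun x => min x 1 * ((|t₀| + 1) * Real.exp (|t₀| + 1))) (s := Metric.ball t₀ 1) (Metric.ball_mem_nhds t₀ one_pos)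
    (Eventually.of_forall fun t => by
      have : Continuous (fun x : ℝ => 1 - Real.exp (-t * (1 - Real.exp (-x)))) := by fun_prop
      exact this.aestronglyMeasurable)
    hFint ((cont_integrand 1 t₀).aestronglyMeasurable) hbound
    ((integrable_min ν hint).mul_const _) hdiff
  exact hD

private lemma Faux_nonneg (ν : Measure ℝ) (r : ℕ) (t : ℝ) : 0 ≤ Faux ν r t := by
  apply integral_nonneg_of_ae
  rw [Filter.EventuallyLE, ae_restrict_iff' measurableSet_Ioi]
  filter_upwards with x hx
  simp only [Pi.zero_apply]
  exact mul_nonneg (pow_nonneg (g_nonneg hx) r) (Real.exp_pos _).le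

private lemma Faux_antitone (ν : Measure ℝ)
    (hint : ∫⁻ x in Set.Ioi (0 : ℝ), ENNReal.ofReal (min x 1) ∂ν < ⊤)
    (r : ℕ) (hr : 1 ≤ r) : Antitone (Faux ν r) := by
  apply antitone_of_deriv_nonpos
  · exact fun t => (hasDerivAt_Faux ν hint r hr t).differentiableAt
  · intro t
    rw [(hasDerivAt_Faux ν hint r hr t).deriv]
    exact neg_nonpos.2 (Faux_nonneg ν (r+1) t)

private lemma slope_tendsto_aux (f : ℝ → ℝ) (d : ℝ) (hd : HasDerivAt f d 1) :
    Filter.Tendsto (fun l => (f l - f 1) / (l - 1)) (nhdsWithin 1 (Set.Ioi 1)) (nhds d) := by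
  have hs := (hasDerivAt_iff_tendsto_slope.1 hd).mono_left
    (nhdsWithin_mono 1 (fun x hx => ne_of_gt hx) : nhdsWithin (1:ℝ) (Set.Ioi 1) ≤ nhdsWithin 1 {(1:ℝ)}ᶜ)
  exact hs.congr (fun l => by rw [slope_def_field])

/-- Lemma 4.1, direct part. Let `ν` be a nonzero σ-finite Borel measure on `(0,∞)` with
`∫ min(x,1) ν(dx) < ∞`, and let `Φ(t) = ∫_{(0,∞)} (1 - exp(-t(1-e^{-x}))) ν(dx)`. If
`Φ(λt) - Φ(t) → c log λ` as `t → ∞` for every `λ > 0` (with `c > 0`), then for every integer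
`r ≥ 1`, `(-1)^{r+1} t^r Φ^{(r)}(t) → c (r-1)!` as `t → ∞`. -/
theorem levy_exponent_deHaan_implies_deriv (ν : Measure ℝ) [SigmaFinite ν]
    (hsupp : ν (Set.Iic 0) = 0) (hnz : ν ≠ 0)
    (hint : ∫⁻ x in Set.Ioi (0 : ℝ), ENNReal.ofReal (min x 1) ∂ν < ⊤)
    (Φ : ℝ → ℝ)
    (hΦ : ∀ t : ℝ, Φ t =
      ∫ x in Set.Ioi (0 : ℝ), (1 - Real.exp (-t * (1 - Real.exp (-x)))) ∂ν)
    (c : ℝ) (hc : 0 < c)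
    (hdeHaan : ∀ l : ℝ, 0 < l →
      Tendsto (fun t : ℝ => Φ (l * t) - Φ t) atTop (nhds (c * Real.log l)))
    (r : ℕ) (hr : 1 ≤ r) :
    Tendsto (fun t : ℝ => (-1 : ℝ) ^ (r + 1) * t ^ r * iteratedDeriv r Φ t)
      atTop (nhds (c * (Nat.factorial (r - 1) : ℝ))) := by
  have hPhiEq : Φ = fun t => ∫ x in Set.Ioi (0:ℝ),
      (1 - Real.exp (-t * (1 - Real.exp (-x)))) ∂ν := funext hΦ
  have hPhiDer : ∀ t, HasDerivAt Φ (Faux ν 1 t) t := fun t => hPhiEq ▸ hasDerivAt_Phi ν hint t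
  have hFder : ∀ (k : ℕ), 1 ≤ k → ∀ (t : ℝ),
      HasDerivAt (Faux ν k) (-(Faux ν (k+1) t)) t :=
    fun k hk t => hasDerivAt_Faux ν hint k hk t
  -- iterated derivative formula
  have hiter : ∀ k, 1 ≤ k → iteratedDeriv k Φ = fun t => (-1:ℝ)^(k+1) * Faux ν k t := by
    intro k hk
    induction k, hk using Nat.le_induction with
    | base =>
      funext t
      rw [iteratedDeriv_one, (hPhiDer t).deriv]
      norm_num
    | succ n hn ih =>
      funext t
      rw [iteratedDeriv_succ, ih]
      have hd : HasDerivAt (fun t => (-1:ℝ)^(n+1) * Faux ν n t)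
          ((-1:ℝ)^(n+1) * (-(Faux ν (n+1) t))) t := (hFder n hn t).const_mul _
      rw [hd.deriv]
      ring
  -- main limit
  have hmain : ∀ k, 1 ≤ k → Tendsto (fun t => t ^ k * Faux ν k t) atTop
      (nhds (c * (Nat.factorial (k-1) : ℝ))) := by
    intro k hk
    induction k, hk using Nat.le_induction with
    | base =>
      have hkey := key_aux (fun t => -Φ t) (Faux ν 1)
        (Faux_antitone ν hint 1 le_rfl) (fun t => (hPhiDer t).neg) 0
        (fun l => c * Real.log l) c
        (by
          intro l hl
          refine Tendsto.congr (fun t => ?_) (hdeHaan l (by linarith))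
          simp only [pow_zero, one_mul]
          ring)
        (by
          have hd : HasDerivAt (fun l : ℝ => c * Real.log l) c 1 := by
            simpa using (Real.hasDerivAt_log one_ne_zero).const_mul c
          exact (slope_tendsto_aux _ c hd).congr (fun l => by simp [Real.log_one]))
        (by
          have hd : HasDerivAt (fun l : ℝ => c * Real.log l) c 1 := by
            simpa using (Real.hasDerivAt_log one_ne_zero).const_mul c
          have h1 : Tendsto (fun l => c * Real.log l / (l - 1))
              (nhdsWithin (1:ℝ) (Set.Ioi 1)) (nhds c) :=
            (slope_tendsto_aux _ c hd).congr (fun l => by simp [Real.log_one])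
          have hpow : Tendsto (fun l : ℝ => l ^ (0+1)) (nhdsWithin (1:ℝ) (Set.Ioi 1))
              (nhds 1) := by
            have h := (continuous_pow (0+1)).tendsto (1:ℝ)
            rw [one_pow] at h
            exact h.mono_left nhdsWithin_le_nhds
          have := hpow.mul h1
          simpa using this)
      have : Tendsto (fun t => t ^ 1 * Faux ν 1 t) atTop (nhds c) := by simpa using hkey
      simpa using this
    | succ n hn ih =>
      obtain ⟨m, rfl⟩ : ∃ m, n = m + 1 := ⟨n-1, (Nat.succ_pred_eq_of_pos hn).symm⟩
      set Lr : ℝ := c * (Nat.factorial m : ℝ) with hLr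
      have ihm : Tendsto (fun t => t ^ (m+1) * Faux ν (m+1) t) atTop (nhds Lr) := by
        have := ih
        simpa using this
      have hkey := key_aux (Faux ν (m+1)) (Faux ν (m+2))
        (Faux_antitone ν hint (m+2) (by omega))
        (fun t => hFder (m+1) (by omega) t) (m+1)
        (fun l => Lr * (1 - (l⁻¹) ^ (m+1))) (Lr * (m+1))
        (by
          intro l hl
          have hl0 : (0:ℝ) < l := by linarith
          have hmul : Tendsto (fun t : ℝ => l * t) atTop atTop :=
            tendsto_id.const_mul_atTop hl0
          have h2 : Tendsto (fun t => (l*t) ^ (m+1) * Faux ν (m+1) (l*t)) atTop (nhds Lr) :=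
            ihm.comp hmul
          have h3 := ihm.sub (h2.const_mul ((l⁻¹) ^ (m+1)))
          have heq : ∀ t : ℝ, t ^ (m+1) * Faux ν (m+1) t
              - (l⁻¹) ^ (m+1) * ((l*t) ^ (m+1) * Faux ν (m+1) (l*t))
              = t ^ (m+1) * (Faux ν (m+1) t - Faux ν (m+1) (l*t)) := by
            intro t
            have : (l⁻¹) ^ (m+1) * (l*t) ^ (m+1) = t ^ (m+1) := by
              rw [mul_pow, ← mul_assoc, ← mul_pow, inv_mul_cancel₀ (ne_of_gt hl0), one_pow,
                one_mul]
            linear_combination (-Faux ν (m+1) (l * t)) * this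
          have hval : Lr - (l⁻¹) ^ (m+1) * Lr = Lr * (1 - (l⁻¹) ^ (m+1)) := by ring
          rw [hval] at h3
          exact Tendsto.congr heq h3)
        (by
          have hd2 : HasDerivAt (fun l : ℝ => -Lr * (l⁻¹)^(m+1)) (Lr * ((m:ℝ)+1)) 1 := by
            have h := ((hasDerivAt_inv (one_ne_zero : (1:ℝ) ≠ 0)).pow (m+1)).const_mul (-Lr)
            exact h.congr_deriv (by simp [Nat.add_sub_cancel]; push_cast; ring)
          exact (slope_tendsto_aux _ _ hd2).congr (fun l => by ring))
        (by
          have hd2 : HasDerivAt (fun l : ℝ => -Lr * (l⁻¹)^(m+1)) (Lr * ((m:ℝ)+1)) 1 := by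
            have h := ((hasDerivAt_inv (one_ne_zero : (1:ℝ) ≠ 0)).pow (m+1)).const_mul (-Lr)
            exact h.congr_deriv (by simp [Nat.add_sub_cancel]; push_cast; ring)
          have h1 : Tendsto (fun l : ℝ => Lr * (1 - (l⁻¹) ^ (m+1)) / (l - 1))
              (nhdsWithin (1:ℝ) (Set.Ioi 1)) (nhds (Lr * ((m:ℝ)+1))) :=
            (slope_tendsto_aux _ _ hd2).congr (fun l => by ring)
          have hpow : Tendsto (fun l : ℝ => l ^ (m+1+1)) (nhdsWithin (1:ℝ) (Set.Ioi 1))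
              (nhds 1) := by
            have h := (continuous_pow (m+1+1)).tendsto (1:ℝ)
            rw [one_pow] at h
            exact h.mono_left nhdsWithin_le_nhds
          have := hpow.mul h1
          simpa using this)
      have hfact : Lr * ((m:ℝ)+1) = c * (Nat.factorial (m+1+1-1) : ℝ) := by
        rw [hLr]
        simp only [Nat.add_sub_cancel]
        rw [Nat.factorial_succ]
        push_cast
        ring
      rw [hfact] at hkey
      exact hkey
  -- conclude
  have h := hmain r hr
  refine Tendsto.congr (fun t => ?_) h
  rw [hiter r hr]
  have hsq : ((-1:ℝ))^(r+1) * ((-1:ℝ))^(r+1) = 1 := by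
    rw [← pow_add]
    exact Even.neg_one_pow ⟨r+1, by ring⟩
  calc t ^ r * Faux ν r t = ((-1:ℝ)^(r+1) * (-1:ℝ)^(r+1)) * (t ^ r * Faux ν r t) := by
        rw [hsq, one_mul]
    _ = (-1:ℝ)^(r+1) * t ^ r * ((-1:ℝ)^(r+1) * Faux ν r t) := by ring
end

section
/- Lemma 4.1, converse part: let ν be a nonzero σ-finite Borel measure on (0,∞) with ∫_{(0,∞)} min(x,1) ν(dx) < ∞, and define Φ(t) = ∫_{(0,∞)} (1 − exp(−t(1 − e^{−x}))) ν(dx) for t > 0. Let c > 0. If for some integer r ≥ 1, lim_{t→∞} (−1)^{r+1} t^r Φ^{(r)}(t) = c·(r−1)!, then for every λ > 0, lim_{t→∞} (Φ(λt) − Φ(t)) = c·log λ. -/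
open Filter MeasureTheory

open Set Topology

noncomputable def lvG (x : ℝ) : ℝ := 1 - Real.exp (-x)

lemma lvG_lt_one (x : ℝ) : lvG x < 1 := by
  simp [lvG, Real.exp_pos]

lemma lvG_pos {x : ℝ} (hx : 0 < x) : 0 < lvG x := by
  simp only [lvG, sub_pos]
  exact Real.exp_lt_one_iff.mpr (by linarith)

lemma lvG_nonneg {x : ℝ} (hx : 0 ≤ x) : 0 ≤ lvG x := by
  simp only [lvG, sub_nonneg]
  exact Real.exp_le_one_iff.mpr (by linarith)

lemma lvG_le_min (x : ℝ) : lvG x ≤ min x 1 := by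
  refine le_min ?_ (lvG_lt_one x).le
  have := Real.add_one_le_exp (-x)
  simp only [lvG]
  nlinarith

lemma lvG_continuous : Continuous lvG := by
  unfold lvG; continuity

lemma lv_abs_exp_sub_one (u : ℝ) : |Real.exp u - 1| ≤ |u| * Real.exp |u| := by
  rcases le_or_gt 0 u with h | h
  · rw [abs_of_nonneg h, abs_of_nonneg (sub_nonneg.2 (Real.one_le_exp h))]
    have h1 : Real.exp u * Real.exp (-u) = 1 := by rw [← Real.exp_add]; simp
    nlinarith [Real.add_one_le_exp (-u), Real.exp_pos u]
  · rw [abs_of_neg h, abs_of_nonpos (sub_nonpos.2 (Real.exp_le_one_iff.2 h.le))]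
    nlinarith [Real.add_one_le_exp u, Real.one_le_exp (neg_nonneg.2 h.le)]

noncomputable def lvF (ν : Measure ℝ) (j : ℕ) (t : ℝ) : ℝ :=
  ∫ x in Set.Ioi (0:ℝ), (lvG x)^j * Real.exp (-t * lvG x) ∂ν

section
variable {ν : Measure ℝ}

lemma lv_min_integrable (hint : ∫⁻ x in Set.Ioi (0:ℝ), ENNReal.ofReal (min x 1) ∂ν < ⊤) :
    IntegrableOn (fun x => min x 1) (Set.Ioi 0) ν := by
  have hae : ∀ᵐ x ∂(ν.restrict (Set.Ioi 0)), x ∈ Set.Ioi (0:ℝ) :=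
    ae_restrict_mem measurableSet_Ioi
  constructor
  · exact (continuous_id.min continuous_const).aestronglyMeasurable
  · rw [hasFiniteIntegral_iff_ofReal (hae.mono fun x hx => le_min hx.le zero_le_one)]
    exact hint

lemma lv_bound {x : ℝ} (hx : x ∈ Set.Ioi (0:ℝ)) {j : ℕ} (hj : 1 ≤ j) {s B : ℝ} (hs : |s| ≤ B) :
    |lvG x ^ j * Real.exp (-s * lvG x)| ≤ min x 1 * Real.exp B := by
  have hg0 : 0 ≤ lvG x := lvG_nonneg hx.le
  have hg1 : lvG x ≤ 1 := (lvG_lt_one x).le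
  have h1 : lvG x ^ j ≤ lvG x := by
    calc lvG x ^ j ≤ lvG x ^ 1 := pow_le_pow_of_le_one hg0 hg1 hj
    _ = lvG x := pow_one _
  have h2 : Real.exp (-s * lvG x) ≤ Real.exp B := by
    apply Real.exp_le_exp.2
    calc -s * lvG x ≤ |s| * lvG x := by
          apply mul_le_mul_of_nonneg_right (neg_le_abs s) hg0
      _ ≤ B * 1 := mul_le_mul hs hg1 hg0 ((abs_nonneg s).trans hs)
      _ = B := mul_one B
  rw [abs_mul, abs_of_nonneg (pow_nonneg hg0 j), abs_of_nonneg (Real.exp_pos _).le]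
  exact mul_le_mul (h1.trans (lvG_le_min x)) h2 (Real.exp_pos _).le
    (le_min hx.le zero_le_one)

lemma lv_meas (j : ℕ) (s : ℝ) :
    AEStronglyMeasurable (fun x => lvG x ^ j * Real.exp (-s * lvG x)) (ν.restrict (Set.Ioi 0)) :=
  (((lvG_continuous.pow j).mul ((continuous_const.mul lvG_continuous).rexp))).aestronglyMeasurable

lemma lvF_integrand_integrable (hint : ∫⁻ x in Set.Ioi (0:ℝ), ENNReal.ofReal (min x 1) ∂ν < ⊤)
    {j : ℕ} (hj : 1 ≤ j) (t : ℝ) :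
    IntegrableOn (fun x => lvG x ^ j * Real.exp (-t * lvG x)) (Set.Ioi 0) ν := by
  apply Integrable.mono ((lv_min_integrable hint).mul_const (Real.exp |t|)) (lv_meas j t)
  filter_upwards [ae_restrict_mem (measurableSet_Ioi (a := (0:ℝ)))] with x hx
  rw [Real.norm_eq_abs, Real.norm_eq_abs]
  exact (lv_bound hx hj le_rfl).trans (le_abs_self _)

end

section
variable {ν : Measure ℝ}

lemma lvF_hasDerivAt (hint : ∫⁻ x in Set.Ioi (0:ℝ), ENNReal.ofReal (min x 1) ∂ν < ⊤)
    {j : ℕ} (hj : 1 ≤ j) (t : ℝ) :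
    HasDerivAt (lvF ν j) (-(lvF ν (j+1) t)) t := by
  have key := hasDerivAt_integral_of_dominated_loc_of_deriv_le
    (μ := ν.restrict (Set.Ioi 0)) (x₀ := t)
    (F := fun s x => lvG x ^ j * Real.exp (-s * lvG x))
    (F' := fun s x => -(lvG x ^ (j+1) * Real.exp (-s * lvG x)))
    (bound := fun x => min x 1 * Real.exp (|t|+1)) (Metric.ball_mem_nhds t zero_lt_one)
    (Filter.Eventually.of_forall fun s => lv_meas j s)
    (lvF_integrand_integrable hint hj t)
    ((lv_meas (j+1) t).neg)
    ?_ ((lv_min_integrable hint).mul_const _) ?_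
  · have := key.2
    have heq : ∫ x in Set.Ioi (0:ℝ), -(lvG x ^ (j+1) * Real.exp (-t * lvG x)) ∂ν
        = -(lvF ν (j+1) t) := by
      rw [integral_neg]; rfl
    rw [heq] at this
    exact this
  · filter_upwards [ae_restrict_mem (measurableSet_Ioi (a := (0:ℝ)))] with x hx s hs
    rw [norm_neg, Real.norm_eq_abs]
    apply lv_bound hx (le_trans hj (Nat.le_succ j))
    have : |s - t| < 1 := by simpa [Real.dist_eq] using Metric.mem_ball.1 hs
    calc |s| = |t + (s - t)| := by ring_nf
      _ ≤ |t| + |s - t| := abs_add_le _ _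
      _ ≤ |t| + 1 := by linarith
  · filter_upwards [ae_restrict_mem (measurableSet_Ioi (a := (0:ℝ)))] with x hx s _
    have h1 : HasDerivAt (fun s : ℝ => -s * lvG x) (-1 * lvG x) s :=
      (hasDerivAt_id s).neg.mul_const (lvG x)
    have h2 := (h1.exp).const_mul (lvG x ^ j)
    refine h2.congr_deriv ?_
    rw [pow_succ]
    ring

lemma lvPhi_hasDerivAt (hint : ∫⁻ x in Set.Ioi (0:ℝ), ENNReal.ofReal (min x 1) ∂ν < ⊤)
    (Φ : ℝ → ℝ)
    (hΦ : ∀ t : ℝ, Φ t = ∫ x in Set.Ioi (0:ℝ), (1 - Real.exp (-t * (1 - Real.exp (-x)))) ∂ν)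
    (t : ℝ) : HasDerivAt Φ (lvF ν 1 t) t := by
  have hmeas : ∀ s : ℝ, AEStronglyMeasurable (fun x => 1 - Real.exp (-s * lvG x))
      (ν.restrict (Set.Ioi 0)) :=
    fun s => (continuous_const.sub (continuous_const.mul lvG_continuous).rexp).aestronglyMeasurable
  have key := hasDerivAt_integral_of_dominated_loc_of_deriv_le
    (μ := ν.restrict (Set.Ioi 0)) (x₀ := t)
    (F := fun s x => 1 - Real.exp (-s * lvG x))
    (F' := fun s x => lvG x ^ 1 * Real.exp (-s * lvG x))
    (bound := fun x => min x 1 * Real.exp (|t|+1)) (Metric.ball_mem_nhds t zero_lt_one)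
    (Filter.Eventually.of_forall hmeas) ?_ (lv_meas 1 t)
    ?_ ((lv_min_integrable hint).mul_const _) ?_
  · have := key.2
    have hfun : (fun s => ∫ x in Set.Ioi (0:ℝ), (1 - Real.exp (-s * lvG x)) ∂ν) = Φ := by
      funext s; rw [hΦ s]; rfl
    rw [hfun] at this
    exact this
  · -- integrability of F t
    apply Integrable.mono ((lv_min_integrable hint).mul_const (|t| * Real.exp |t|)) (hmeas t)
    · filter_upwards [ae_restrict_mem (measurableSet_Ioi (a := (0:ℝ)))] with x hx
      rw [Real.norm_eq_abs, Real.norm_eq_abs, abs_mul]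
      have hg0 : 0 ≤ lvG x := lvG_nonneg hx.le
      have hg1 : lvG x ≤ 1 := (lvG_lt_one x).le
      have h1 : |1 - Real.exp (-t * lvG x)| ≤ |(-t * lvG x)| * Real.exp |(-t * lvG x)| := by
        rw [abs_sub_comm]
        exact lv_abs_exp_sub_one _
      have h2 : |(-t * lvG x)| = |t| * lvG x := by
        rw [abs_mul, abs_neg, abs_of_nonneg hg0]
      have h3 : Real.exp (|t| * lvG x) ≤ Real.exp |t| := by
        apply Real.exp_le_exp.2
        nlinarith [abs_nonneg t]
      have h4 : lvG x ≤ |min x 1| := by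
        rw [abs_of_nonneg (le_min hx.le zero_le_one)]
        exact lvG_le_min x
      calc |1 - Real.exp (-t * lvG x)| ≤ (|t| * lvG x) * Real.exp (|t| * lvG x) := by
            rw [← h2]; exact h1
        _ ≤ |min x 1| * |(|t| * Real.exp |t|)| := by
            rw [abs_of_nonneg (by positivity : (0:ℝ) ≤ |t| * Real.exp |t|)]
            calc |t| * lvG x * Real.exp (|t| * lvG x)
                ≤ (|t| * |min x 1|) * Real.exp |t| :=
                  mul_le_mul (mul_le_mul_of_nonneg_left h4 (abs_nonneg t)) h3
                    (Real.exp_pos _).le (by positivity)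
              _ = |min x 1| * (|t| * Real.exp |t|) := by ring
  · filter_upwards [ae_restrict_mem (measurableSet_Ioi (a := (0:ℝ)))] with x hx s hs
    rw [Real.norm_eq_abs]
    apply lv_bound hx le_rfl
    have : |s - t| < 1 := by simpa [Real.dist_eq] using Metric.mem_ball.1 hs
    calc |s| = |t + (s - t)| := by ring_nf
      _ ≤ |t| + |s - t| := abs_add_le _ _
      _ ≤ |t| + 1 := by linarith
  · filter_upwards [ae_restrict_mem (measurableSet_Ioi (a := (0:ℝ)))] with x hx s _
    have h1 : HasDerivAt (fun s : ℝ => -s * lvG x) (-1 * lvG x) s :=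
      (hasDerivAt_id s).neg.mul_const (lvG x)
    have h2 := (h1.exp).const_sub 1
    convert h2 using 1
    ring

end

section
variable {ν : Measure ℝ}

lemma lvF_nonneg (j : ℕ) (t : ℝ) : 0 ≤ lvF ν j t := by
  apply setIntegral_nonneg measurableSet_Ioi
  intro x hx
  exact mul_nonneg (pow_nonneg (lvG_nonneg hx.le) j) (Real.exp_pos _).le

lemma lv_iteratedDeriv (hint : ∫⁻ x in Set.Ioi (0:ℝ), ENNReal.ofReal (min x 1) ∂ν < ⊤)
    (Φ : ℝ → ℝ)
    (hΦ : ∀ t : ℝ, Φ t = ∫ x in Set.Ioi (0:ℝ), (1 - Real.exp (-t * (1 - Real.exp (-x)))) ∂ν)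
    {j : ℕ} (hj : 1 ≤ j) :
    iteratedDeriv j Φ = fun t => (-1:ℝ)^(j+1) * lvF ν j t := by
  induction j, hj using Nat.le_induction with
  | base =>
    funext t
    rw [iteratedDeriv_one, (lvPhi_hasDerivAt hint Φ hΦ t).deriv]
    norm_num
  | succ j hj ih =>
    funext t
    rw [iteratedDeriv_succ, ih]
    have h := ((lvF_hasDerivAt hint hj t).const_mul ((-1:ℝ)^(j+1))).deriv
    rw [h]
    rw [pow_succ]
    ring

lemma lvF_tendsto_zero (hint : ∫⁻ x in Set.Ioi (0:ℝ), ENNReal.ofReal (min x 1) ∂ν < ⊤)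
    {j : ℕ} (hj : 1 ≤ j) : Tendsto (lvF ν j) atTop (𝓝 0) := by
  have h0 : (0:ℝ) = ∫ x in Set.Ioi (0:ℝ), (0:ℝ) ∂ν := by simp
  rw [h0]
  apply tendsto_integral_filter_of_dominated_convergence (fun x => min x 1)
    (Filter.Eventually.of_forall fun s => lv_meas j s)
  · filter_upwards [eventually_ge_atTop (0:ℝ)] with t ht
    filter_upwards [ae_restrict_mem (measurableSet_Ioi (a := (0:ℝ)))] with x hx
    rw [Real.norm_eq_abs]
    have := lv_bound hx hj (le_refl |t|)
    calc |lvG x ^ j * Real.exp (-t * lvG x)| ≤ |lvG x ^ j| * |Real.exp (-t * lvG x)| :=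
          (abs_mul _ _).le
      _ ≤ min x 1 * 1 := by
          apply mul_le_mul
          · rw [abs_of_nonneg (pow_nonneg (lvG_nonneg hx.le) j)]
            calc lvG x ^ j ≤ lvG x ^ 1 :=
                  pow_le_pow_of_le_one (lvG_nonneg hx.le) (lvG_lt_one x).le hj
              _ = lvG x := pow_one _
              _ ≤ min x 1 := lvG_le_min x
          · rw [abs_of_nonneg (Real.exp_pos _).le]
            exact Real.exp_le_one_iff.2 (by nlinarith [lvG_nonneg hx.le])
          · exact abs_nonneg _
          · exact le_min hx.le zero_le_one
      _ = min x 1 := mul_one _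
  · exact lv_min_integrable hint
  · filter_upwards [ae_restrict_mem (measurableSet_Ioi (a := (0:ℝ)))] with x hx
    have h1 : Tendsto (fun t : ℝ => -t * lvG x) atTop atBot := by
      have h := (tendsto_id (α := ℝ) (x := atTop)).atTop_mul_const (lvG_pos hx)
      have h2 := tendsto_neg_atBot_iff.mpr h
      simpa [neg_mul] using h2
    have h2 := (Real.tendsto_exp_atBot.comp h1).const_mul (lvG x ^ j)
    simpa using h2

lemma lvF_eq_integral (hint : ∫⁻ x in Set.Ioi (0:ℝ), ENNReal.ofReal (min x 1) ∂ν < ⊤)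
    {j : ℕ} (hj : 1 ≤ j) {a : ℝ}
    (hInt : IntegrableOn (fun s => lvF ν (j+1) s) (Set.Ioi a)) :
    lvF ν j a = ∫ s in Set.Ioi a, lvF ν (j+1) s := by
  have key := integral_Ioi_of_hasDerivAt_of_tendsto (f := lvF ν j)
    (f' := fun s => -(lvF ν (j+1) s)) (a := a) (m := 0)
    (lvF_hasDerivAt hint hj a).continuousAt.continuousWithinAt
    (fun x _ => lvF_hasDerivAt hint hj x) hInt.neg (lvF_tendsto_zero hint hj)
  rw [integral_neg] at key
  linarith

lemma lvF_continuous (hint : ∫⁻ x in Set.Ioi (0:ℝ), ENNReal.ofReal (min x 1) ∂ν < ⊤)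
    {j : ℕ} (hj : 1 ≤ j) : Continuous (lvF ν j) :=
  continuous_iff_continuousAt.2 fun t => (lvF_hasDerivAt hint hj t).continuousAt

lemma lv_step (hint : ∫⁻ x in Set.Ioi (0:ℝ), ENNReal.ofReal (min x 1) ∂ν < ⊤)
    {k : ℕ} (hk : 1 ≤ k) {C : ℝ} (hC : 0 < C)
    (h : Tendsto (fun t => t^(k+1) * lvF ν (k+1) t) atTop (𝓝 C)) :
    Tendsto (fun t => t^k * lvF ν k t) atTop (𝓝 (C / k)) := by
  have hK : (0:ℝ) < (k:ℝ) := by exact_mod_cast hk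
  have hexp : (-((k:ℝ)+1)) < -1 := by linarith
  rw [Metric.tendsto_atTop] at h ⊢
  intro ε hε
  set δ := (k:ℝ) * ε / 2 with hδdef
  have hδ : 0 < δ := by positivity
  obtain ⟨N₀, hN₀⟩ := h δ hδ
  set N := max N₀ 1 with hNdef
  refine ⟨N, fun t ht => ?_⟩
  have ht1 : (1:ℝ) ≤ t := le_trans (le_max_right _ _) ht
  have ht0 : (0:ℝ) < t := lt_of_lt_of_le one_pos ht1
  have hbnd : ∀ s ∈ Set.Ioi t, lvF ν (k+1) s ≤ (C + δ) * s ^ (-((k:ℝ)+1)) := by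
    intro s hs
    have hs0 : (0:ℝ) < s := lt_trans ht0 hs
    have hsk : (0:ℝ) < s ^ (k+1) := pow_pos hs0 _
    have := hN₀ s (le_trans (le_max_left _ _) (le_of_lt (lt_of_le_of_lt ht hs)))
    rw [Real.dist_eq, abs_lt] at this
    rw [Real.rpow_neg hs0.le, show ((k:ℝ)+1) = ((k+1 : ℕ):ℝ) by push_cast; ring,
      Real.rpow_natCast]
    rw [← div_eq_mul_inv, le_div_iff₀ hsk]
    nlinarith [this.2]
  have hbnd' : ∀ s ∈ Set.Ioi t, (C - δ) * s ^ (-((k:ℝ)+1)) ≤ lvF ν (k+1) s := by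
    intro s hs
    have hs0 : (0:ℝ) < s := lt_trans ht0 hs
    have hsk : (0:ℝ) < s ^ (k+1) := pow_pos hs0 _
    have := hN₀ s (le_trans (le_max_left _ _) (le_of_lt (lt_of_le_of_lt ht hs)))
    rw [Real.dist_eq, abs_lt] at this
    rw [Real.rpow_neg hs0.le, show ((k:ℝ)+1) = ((k+1 : ℕ):ℝ) by push_cast; ring,
      Real.rpow_natCast]
    rw [← div_eq_mul_inv, div_le_iff₀ hsk]
    nlinarith [this.1]
  have hk1 : 1 ≤ k + 1 := Nat.le_add_left 1 k
  have hcont := lvF_continuous (ν := ν) hint hk1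
  have hrpowInt : IntegrableOn (fun s : ℝ => s ^ (-((k:ℝ)+1))) (Set.Ioi t) :=
    integrableOn_Ioi_rpow_of_lt hexp ht0
  have hInt : IntegrableOn (fun s => lvF ν (k+1) s) (Set.Ioi t) := by
    apply Integrable.mono (hrpowInt.const_mul (C + δ)) hcont.aestronglyMeasurable
    filter_upwards [ae_restrict_mem (measurableSet_Ioi (a := t))] with s hs
    rw [Real.norm_eq_abs, Real.norm_eq_abs, abs_of_nonneg (lvF_nonneg _ _)]
    exact (hbnd s hs).trans (le_abs_self _)
  have hrep := lvF_eq_integral hint hk (a := t) hInt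
  have hval : ∫ s in Set.Ioi t, s ^ (-((k:ℝ)+1)) = t ^ (-(k:ℝ)) / k := by
    rw [integral_Ioi_rpow_of_lt hexp ht0, show (-((k:ℝ)+1)) + 1 = -(k:ℝ) by ring,
      neg_div_neg_eq]
  have hup : lvF ν k t ≤ (C + δ) * (t ^ (-(k:ℝ)) / k) := by
    rw [hrep]
    calc ∫ s in Set.Ioi t, lvF ν (k+1) s
        ≤ ∫ s in Set.Ioi t, (C+δ) * s ^ (-((k:ℝ)+1)) :=
          setIntegral_mono_on hInt (hrpowInt.const_mul _) measurableSet_Ioi hbnd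
      _ = (C+δ) * (t ^ (-(k:ℝ)) / k) := by rw [integral_const_mul, hval]
  have hlo : (C - δ) * (t ^ (-(k:ℝ)) / k) ≤ lvF ν k t := by
    rw [hrep]
    calc (C - δ) * (t ^ (-(k:ℝ)) / k)
        = ∫ s in Set.Ioi t, (C-δ) * s ^ (-((k:ℝ)+1)) := by rw [integral_const_mul, hval]
      _ ≤ ∫ s in Set.Ioi t, lvF ν (k+1) s :=
          setIntegral_mono_on (hrpowInt.const_mul _) hInt measurableSet_Ioi hbnd'
  have htk : (0:ℝ) < t ^ k := pow_pos ht0 k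
  have hid : t ^ k * t ^ (-(k:ℝ)) = 1 := by
    rw [Real.rpow_neg ht0.le, Real.rpow_natCast, mul_inv_cancel₀ htk.ne']
  have h1 : t ^ k * lvF ν k t ≤ (C+δ)/k := by
    calc t ^ k * lvF ν k t ≤ t ^ k * ((C+δ) * (t ^ (-(k:ℝ)) / k)) :=
          mul_le_mul_of_nonneg_left hup htk.le
      _ = (C+δ)/k * (t ^ k * t ^ (-(k:ℝ))) := by ring
      _ = (C+δ)/k := by rw [hid, mul_one]
  have h2 : (C-δ)/k ≤ t ^ k * lvF ν k t := by
    calc (C-δ)/k = (C-δ)/k * (t ^ k * t ^ (-(k:ℝ))) := by rw [hid, mul_one]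
      _ = t ^ k * ((C-δ) * (t ^ (-(k:ℝ)) / k)) := by ring
      _ ≤ t ^ k * lvF ν k t := mul_le_mul_of_nonneg_left hlo htk.le
  have hd : δ / (k:ℝ) = ε/2 := by
    field_simp [hδdef]
    ring
  have hd1 : (C+δ)/k = C/k + ε/2 := by rw [add_div, hd]
  have hd2 : (C-δ)/k = C/k - ε/2 := by rw [sub_div, hd]
  rw [Real.dist_eq, abs_lt]
  constructor <;> linarith

lemma lv_P1 (hint : ∫⁻ x in Set.Ioi (0:ℝ), ENNReal.ofReal (min x 1) ∂ν < ⊤)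
    {c : ℝ} (hc : 0 < c) {r : ℕ} (hr : 1 ≤ r)
    (hbase : Tendsto (fun t => t^r * lvF ν r t) atTop (𝓝 (c * (Nat.factorial (r-1) : ℝ)))) :
    Tendsto (fun t => t * lvF ν 1 t) atTop (𝓝 c) := by
  have claim : ∀ m k, 1 ≤ k → k + m = r →
      Tendsto (fun t => t^k * lvF ν k t) atTop (𝓝 (c * (Nat.factorial (k-1) : ℝ))) := by
    intro m
    induction m with
    | zero => intro k hk hkr; rw [Nat.add_zero] at hkr; subst hkr; exact hbase
    | succ m ih =>
      intro k hk hkr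
      have hkr' : (k+1) + m = r := by omega
      have ih' := ih (k+1) (by omega) hkr'
      have hfac : ((k+1) - 1 : ℕ) = k := by omega
      rw [hfac] at ih'
      have hstep := lv_step hint hk (C := c * (Nat.factorial k : ℝ))
        (by positivity) ih'
      have heq : c * (Nat.factorial k : ℝ) / (k:ℕ) = c * (Nat.factorial (k-1) : ℝ) := by
        obtain ⟨j, rfl⟩ := Nat.exists_eq_add_of_le hk
        have : Nat.factorial (1 + j) = (1 + j) * Nat.factorial j := by
          rw [Nat.add_comm 1 j, Nat.factorial_succ, Nat.add_comm j 1]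
        rw [this, show (1 + j - 1 : ℕ) = j by omega]
        have hne : ((1 + j : ℕ):ℝ) ≠ 0 := by positivity
        push_cast
        field_simp
      rw [heq] at hstep
      exact hstep
  have := claim (r - 1) 1 le_rfl (by omega)
  simpa using this

lemma lv_final (hint : ∫⁻ x in Set.Ioi (0:ℝ), ENNReal.ofReal (min x 1) ∂ν < ⊤)
    (Φ : ℝ → ℝ)
    (hΦ : ∀ t : ℝ, Φ t = ∫ x in Set.Ioi (0:ℝ), (1 - Real.exp (-t * (1 - Real.exp (-x)))) ∂ν)
    {c : ℝ} (hc : 0 < c)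
    (hP1 : Tendsto (fun t => t * lvF ν 1 t) atTop (𝓝 c)) {l : ℝ} (hl : 1 < l) :
    Tendsto (fun t => Φ (l*t) - Φ t) atTop (𝓝 (c * Real.log l)) := by
  have hlog : 0 < Real.log l := Real.log_pos hl
  have hl0 : (0:ℝ) < l := lt_trans one_pos hl
  rw [Metric.tendsto_atTop] at hP1 ⊢
  intro ε hε
  set ε' := ε / (2 * Real.log l) with hε'def
  have hε' : 0 < ε' := by positivity
  obtain ⟨N₀, hN₀⟩ := hP1 ε' hε'
  refine ⟨max N₀ 1, fun t ht => ?_⟩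
  have ht1 : (1:ℝ) ≤ t := le_trans (le_max_right _ _) ht
  have ht0 : (0:ℝ) < t := lt_of_lt_of_le one_pos ht1
  have hNle : N₀ ≤ t := le_trans (le_max_left _ _) ht
  have httl : t ≤ l * t := by nlinarith
  have hlt0 : (0:ℝ) < l * t := mul_pos hl0 ht0
  have hFTC : Φ (l*t) - Φ t = ∫ s in t..(l*t), lvF ν 1 s := by
    rw [intervalIntegral.integral_eq_sub_of_hasDerivAt
      (fun s _ => lvPhi_hasDerivAt hint Φ hΦ s)
      ((lvF_continuous hint le_rfl).intervalIntegrable _ _)]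
  have hinvInt : IntervalIntegrable (fun s : ℝ => s⁻¹) volume t (l*t) := by
    apply ContinuousOn.intervalIntegrable
    apply ContinuousOn.inv₀ continuousOn_id
    intro x hx
    rw [Set.uIcc_of_le httl] at hx
    exact (lt_of_lt_of_le ht0 hx.1).ne'
  have hinvval : ∫ s in t..(l*t), s⁻¹ = Real.log l := by
    rw [integral_inv_of_pos ht0 hlt0, mul_div_assoc, div_self ht0.ne', mul_one]
  have hub : Φ (l*t) - Φ t ≤ (c + ε') * Real.log l := by
    rw [hFTC]
    calc ∫ s in t..(l*t), lvF ν 1 s ≤ ∫ s in t..(l*t), (c + ε') * s⁻¹ := by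
          apply intervalIntegral.integral_mono_on httl
            ((lvF_continuous hint le_rfl).intervalIntegrable _ _) (hinvInt.const_mul _)
          intro s hs
          have hs0 : 0 < s := lt_of_lt_of_le ht0 hs.1
          have := hN₀ s (le_trans hNle hs.1)
          rw [Real.dist_eq, abs_lt] at this
          rw [mul_comm, ← div_eq_inv_mul, le_div_iff₀ hs0]
          nlinarith [this.2]
      _ = (c + ε') * Real.log l := by
          rw [intervalIntegral.integral_const_mul, hinvval]
  have hlb : (c - ε') * Real.log l ≤ Φ (l*t) - Φ t := by
    rw [hFTC]
    calc (c - ε') * Real.log l = ∫ s in t..(l*t), (c - ε') * s⁻¹ := by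
          rw [intervalIntegral.integral_const_mul, hinvval]
      _ ≤ ∫ s in t..(l*t), lvF ν 1 s := by
          apply intervalIntegral.integral_mono_on httl (hinvInt.const_mul _)
            ((lvF_continuous hint le_rfl).intervalIntegrable _ _)
          intro s hs
          have hs0 : 0 < s := lt_of_lt_of_le ht0 hs.1
          have := hN₀ s (le_trans hNle hs.1)
          rw [Real.dist_eq, abs_lt] at this
          rw [mul_comm, ← div_eq_inv_mul, div_le_iff₀ hs0]
          nlinarith [this.1]
  have hkey : ε' * Real.log l = ε / 2 := by
    rw [hε'def]; field_simp
  rw [Real.dist_eq, abs_lt]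
  constructor <;> nlinarith

end

/-- Lemma 4.1, converse part. Let `ν` be a nonzero σ-finite Borel measure on `(0,∞)` with
`∫ min(x,1) ν(dx) < ∞`, and let `Φ(t) = ∫_{(0,∞)} (1 - exp(-t(1-e^{-x}))) ν(dx)`. If for some
integer `r ≥ 1`, `(-1)^{r+1} t^r Φ^{(r)}(t) → c (r-1)!` as `t → ∞` (with `c > 0`), then for
every `λ > 0`, `Φ(λt) - Φ(t) → c log λ` as `t → ∞`. -/
theorem levy_exponent_deriv_implies_deHaan (ν : Measure ℝ) [SigmaFinite ν]
    (hsupp : ν (Set.Iic 0) = 0) (hnz : ν ≠ 0)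
    (hint : ∫⁻ x in Set.Ioi (0 : ℝ), ENNReal.ofReal (min x 1) ∂ν < ⊤)
    (Φ : ℝ → ℝ)
    (hΦ : ∀ t : ℝ, Φ t =
      ∫ x in Set.Ioi (0 : ℝ), (1 - Real.exp (-t * (1 - Real.exp (-x)))) ∂ν)
    (c : ℝ) (hc : 0 < c)
    (r : ℕ) (hr : 1 ≤ r)
    (hderiv : Tendsto (fun t : ℝ => (-1 : ℝ) ^ (r + 1) * t ^ r * iteratedDeriv r Φ t)
      atTop (nhds (c * (Nat.factorial (r - 1) : ℝ)))) :
    ∀ l : ℝ, 0 < l →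
      Tendsto (fun t : ℝ => Φ (l * t) - Φ t) atTop (nhds (c * Real.log l)) := by
  intro l hl
  have hEq : ∀ t : ℝ, (-1:ℝ)^(r+1) * t^r * iteratedDeriv r Φ t = t^r * lvF ν r t := by
    intro t
    rw [lv_iteratedDeriv hint Φ hΦ hr]
    have hsq : ((-1:ℝ))^(r+1) * ((-1:ℝ))^(r+1) = 1 := by
      rw [← pow_add, Even.neg_one_pow ⟨r+1, by ring⟩]
    calc (-1:ℝ)^(r+1) * t^r * ((-1:ℝ)^(r+1) * lvF ν r t)
        = ((-1:ℝ)^(r+1) * (-1:ℝ)^(r+1)) * (t^r * lvF ν r t) := by ring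
      _ = t^r * lvF ν r t := by rw [hsq, one_mul]
  have hbase : Tendsto (fun t : ℝ => t^r * lvF ν r t) atTop
      (𝓝 (c * (Nat.factorial (r-1) : ℝ))) := Tendsto.congr hEq hderiv
  have hP1 := lv_P1 hint hc hr hbase
  rcases lt_trichotomy l 1 with hlt | heq | hgt
  · have hinv : 1 < l⁻¹ := (one_lt_inv₀ hl).2 hlt
    have h2 := lv_final hint Φ hΦ hc hP1 hinv
    have hcomp : Tendsto (fun t : ℝ => l * t) atTop atTop :=
      Tendsto.const_mul_atTop hl tendsto_id
    have h3 := h2.comp hcomp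
    have h4 : Tendsto (fun t : ℝ => Φ t - Φ (l*t)) atTop (𝓝 (c * Real.log l⁻¹)) := by
      apply Tendsto.congr _ h3
      intro t
      show Φ (l⁻¹ * (l * t)) - Φ (l * t) = _
      rw [← mul_assoc, inv_mul_cancel₀ hl.ne', one_mul]
    have h5 := h4.neg
    rw [Real.log_inv] at h5
    have h6 : -(c * -Real.log l) = c * Real.log l := by ring
    rw [h6] at h5
    apply Tendsto.congr _ h5
    intro t
    ring
  · subst heq
    simp only [one_mul, sub_self, Real.log_one, mul_zero]
    exact tendsto_const_nhds
  · exact lv_final hint Φ hΦ hc hP1 hgt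
end

section
/- Derivative identity for the critical Φ: let Φ(t) = ∫_0^t (1 − e^{−y})/y dy and, for an integer r ≥ 1, let F_r(t) = 1 − e^{−t} ∑_{k=0}^{r−1} t^k/k!. Then for every integer r ≥ 1 and every t > 0, (−1)^{r+1} t^r Φ^{(r)}(t) = (r−1)! · F_r(t), where Φ^{(r)} denotes the r-th derivative of Φ. Consequently, for each r ≥ 1 the function t ↦ (−1)^{r+1} t^r Φ^{(r)}(t) is nondecreasing on (0,∞). -/
open MeasureTheory

noncomputable def myf : ℝ → ℝ := fun y => (1 - Real.exp (-y)) / y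
noncomputable def myPhi : ℝ → ℝ := fun s => ∫ y in (0:ℝ)..s, myf y
noncomputable def myG (r : ℕ) (t : ℝ) : ℝ :=
  (-1 : ℝ) ^ (r + 1) * (Nat.factorial (r - 1) : ℝ)
    * (1 - Real.exp (-t) * ∑ k ∈ Finset.range r, t ^ k / (Nat.factorial k : ℝ)) / t ^ r

lemma myf_meas : Measurable myf := by
  unfold myf
  exact (measurable_const.sub (Real.measurable_exp.comp measurable_neg)).div measurable_id

lemma myf_bound {y : ℝ} (hy : 0 ≤ y) : ‖myf y‖ ≤ 1 := by
  unfold myf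
  rcases eq_or_lt_of_le hy with h | h
  · simp [← h]
  · have h1 : 1 - Real.exp (-y) ≤ y := by
      have := Real.add_one_le_exp (-y); linarith
    have h2 : 0 ≤ 1 - Real.exp (-y) := by
      have : Real.exp (-y) ≤ 1 := Real.exp_le_one_iff.2 (by linarith)
      linarith
    rw [Real.norm_eq_abs, abs_div, abs_of_nonneg h2, abs_of_pos h]
    rw [div_le_one h]; linarith

lemma myf_intg {t : ℝ} (ht : 0 ≤ t) : IntervalIntegrable myf volume 0 t := by
  rw [intervalIntegrable_iff]
  rw [Set.uIoc_of_le ht]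
  apply Measure.integrableOn_of_bounded (M := 1) measure_Ioc_lt_top.ne
    myf_meas.aestronglyMeasurable
  filter_upwards [ae_restrict_mem measurableSet_Ioc] with y hy
  exact myf_bound hy.1.le

lemma myPhi_hasDeriv {t : ℝ} (ht : 0 < t) : HasDerivAt myPhi (myf t) t := by
  apply intervalIntegral.integral_hasDerivAt_right (myf_intg ht.le)
    ⟨Set.univ, Filter.univ_mem, myf_meas.aestronglyMeasurable.restrict⟩
  unfold myf
  exact (continuousAt_const.sub ((Real.continuous_exp.continuousAt).comp
    (continuousAt_id.neg))).div continuousAt_id ht.ne'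

lemma sum_hasDeriv (m : ℕ) (t : ℝ) :
    HasDerivAt (fun t : ℝ => ∑ k ∈ Finset.range (m+1), t ^ k / (Nat.factorial k : ℝ))
      (∑ k ∈ Finset.range m, t ^ k / (Nat.factorial k : ℝ)) t := by
  have h := HasDerivAt.fun_sum (fun k (_ : k ∈ Finset.range (m+1)) =>
    (hasDerivAt_pow k t).div_const (Nat.factorial k : ℝ))
  refine h.congr_deriv ?_
  symm
  rw [Finset.sum_range_succ']
  simp only [Nat.cast_zero, pow_zero, zero_mul, Nat.factorial_zero, Nat.cast_one, zero_div,
    add_zero, Nat.add_sub_cancel]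
  apply Finset.sum_congr rfl
  intro i _
  have hfac : ((Nat.factorial (i+1) : ℝ)) = (i+1) * (Nat.factorial i : ℝ) := by
    rw [Nat.factorial_succ]; push_cast; ring
  have h0 : (Nat.factorial i : ℝ) ≠ 0 := Nat.cast_ne_zero.2 (Nat.factorial_ne_zero i)
  rw [hfac]
  field_simp
  push_cast
  ring

lemma num_hasDeriv (m : ℕ) (t : ℝ) :
    HasDerivAt (fun t : ℝ => 1 - Real.exp (-t) * ∑ k ∈ Finset.range (m+1), t ^ k / (Nat.factorial k : ℝ))
      (Real.exp (-t) * t ^ m / (Nat.factorial m : ℝ)) t := by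
  have hexp : HasDerivAt (fun t : ℝ => Real.exp (-t)) (Real.exp (-t) * (-1)) t :=
    (hasDerivAt_neg t).exp
  have h := (hasDerivAt_const t (1:ℝ)).sub (hexp.mul (sum_hasDeriv m t))
  refine h.congr_deriv ?_
  symm
  rw [Finset.sum_range_succ]
  have h0 : (Nat.factorial m : ℝ) ≠ 0 := Nat.cast_ne_zero.2 (Nat.factorial_ne_zero m)
  field_simp
  ring

lemma myG_hasDeriv (m : ℕ) {t : ℝ} (ht : 0 < t) :
    HasDerivAt (myG (m+1)) (myG (m+2) t) t := by
  have hv := hasDerivAt_pow (m+1) t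
  have hu := ((num_hasDeriv m t).const_mul ((-1:ℝ)^(m+2) * (Nat.factorial m : ℝ)))
  have h := hu.div hv (pow_ne_zero (m+1) ht.ne')
  have hG : myG (m+1) = fun t : ℝ => ((-1:ℝ)^(m+2) * (Nat.factorial m : ℝ)
      * (1 - Real.exp (-t) * ∑ k ∈ Finset.range (m+1), t ^ k / (Nat.factorial k : ℝ)))
      / t^(m+1) := by
    funext s; simp [myG, mul_div_assoc]
  rw [hG]
  refine h.congr_deriv ?_
  symm
  have h0 : (Nat.factorial m : ℝ) ≠ 0 := Nat.cast_ne_zero.2 (Nat.factorial_ne_zero m)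
  have hfac : ((Nat.factorial (m+1) : ℝ)) = (m+1) * (Nat.factorial m : ℝ) := by
    rw [Nat.factorial_succ]; push_cast; ring
  simp only [myG, Nat.add_sub_cancel, Finset.sum_range_succ, Nat.factorial_succ]
  have hpow : ((-1:ℝ))^(m+2+1) = -((-1:ℝ))^(m+2) := by ring
  rw [hpow]
  push_cast
  field_simp
  have hfac' : ((Nat.factorial (1+m) : ℝ)) = (m+1) * (Nat.factorial m : ℝ) := by
    rw [Nat.add_comm, Nat.factorial_succ]; push_cast; ring
  rw [hfac]
  ring

lemma iter_eq (m : ℕ) : ∀ t : ℝ, 0 < t → iteratedDeriv (m+1) myPhi t = myG (m+1) t := by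
  induction m with
  | zero =>
    intro t ht
    rw [iteratedDeriv_one, (myPhi_hasDeriv ht).deriv]
    simp [myG, myf, Finset.sum_range_one]
  | succ m ih =>
    intro t ht
    rw [iteratedDeriv_succ]
    have hev : iteratedDeriv (m+1) myPhi =ᶠ[nhds t] myG (m+1) := by
      filter_upwards [isOpen_Ioi.mem_nhds (Set.mem_Ioi.2 ht)] with s hs
      exact ih s hs
    rw [hev.deriv_eq, (myG_hasDeriv m ht).deriv]

lemma F_mono (m : ℕ) : MonotoneOn
    (fun t : ℝ => 1 - Real.exp (-t) * ∑ k ∈ Finset.range (m+1), t ^ k / (Nat.factorial k : ℝ))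
    (Set.Ici (0:ℝ)) := by
  apply monotoneOn_of_deriv_nonneg (convex_Ici 0)
  · exact fun t _ => ((num_hasDeriv m t).continuousAt).continuousWithinAt
  · exact fun t _ => ((num_hasDeriv m t).differentiableAt).differentiableWithinAt
  · intro t ht
    rw [interior_Ici] at ht
    rw [(num_hasDeriv m t).deriv]
    exact div_nonneg (mul_nonneg (Real.exp_nonneg _) (pow_nonneg (le_of_lt ht) _))
      (Nat.cast_nonneg _)

/-- Derivative identity for the critical `Φ(t) = ∫_0^t (1-e^{-y})/y dy`: for every integer
`r ≥ 1` and every `t > 0`, `(-1)^{r+1} t^r Φ^{(r)}(t) = (r-1)! F_r(t)`, where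
`F_r(t) = 1 - e^{-t} ∑_{k=0}^{r-1} t^k/k!` is the `Gamma(r,1)` cdf. Consequently
`t ↦ (-1)^{r+1} t^r Φ^{(r)}(t)` is nondecreasing on `(0,∞)`. -/
theorem critical_levy_Phi_iteratedDeriv (r : ℕ) (hr : 1 ≤ r) :
    (∀ t : ℝ, 0 < t →
      (-1 : ℝ) ^ (r + 1) * t ^ r
          * iteratedDeriv r (fun s : ℝ => ∫ y in (0 : ℝ)..s, (1 - Real.exp (-y)) / y) t
        = (Nat.factorial (r - 1) : ℝ)
          * (1 - Real.exp (-t) * ∑ k ∈ Finset.range r, t ^ k / (Nat.factorial k : ℝ))) ∧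
    MonotoneOn
      (fun t : ℝ => (-1 : ℝ) ^ (r + 1) * t ^ r
        * iteratedDeriv r (fun s : ℝ => ∫ y in (0 : ℝ)..s, (1 - Real.exp (-y)) / y) t)
      (Set.Ioi (0 : ℝ)) := by
  obtain ⟨m, rfl⟩ : ∃ m, r = m + 1 := ⟨r - 1, (Nat.succ_pred_eq_of_pos hr).symm⟩
  have hPhi : (fun s : ℝ => ∫ y in (0 : ℝ)..s, (1 - Real.exp (-y)) / y) = myPhi := rfl
  have key : ∀ t : ℝ, 0 < t →
      (-1 : ℝ) ^ (m + 1 + 1) * t ^ (m + 1)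
          * iteratedDeriv (m+1) (fun s : ℝ => ∫ y in (0 : ℝ)..s, (1 - Real.exp (-y)) / y) t
        = (Nat.factorial (m + 1 - 1) : ℝ)
          * (1 - Real.exp (-t) * ∑ k ∈ Finset.range (m+1), t ^ k / (Nat.factorial k : ℝ)) := by
    intro t ht
    rw [hPhi, iter_eq m t ht]
    simp only [myG, Nat.add_sub_cancel]
    have hsq : ((-1:ℝ))^(m+1+1) * (-1:ℝ)^(m+1+1) = 1 := by
      rw [← pow_add]
      exact Even.neg_one_pow ⟨m+1+1, by ring⟩
    have htp : (t:ℝ)^(m+1) ≠ 0 := pow_ne_zero _ ht.ne'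
    field_simp
    linear_combination (
      (1 - Real.exp (-t) * ∑ k ∈ Finset.range (m+1), t ^ k / (Nat.factorial k : ℝ))
      ) * hsq
  refine ⟨key, ?_⟩
  intro a ha b hb hab
  simp only
  rw [key a ha, key b hb]
  have hF := F_mono m (Set.mem_Ici.2 (le_of_lt ha)) (Set.mem_Ici.2 (le_of_lt hb)) hab
  exact mul_le_mul_of_nonneg_left hF (Nat.cast_nonneg _)
end

section
/- Transition probabilities of the leaf-count chain (computation in the proof of Proposition 2.1): for all integers 1 ≤ k ≤ m, binom(m,k) · ∫_{(0,∞)} (1 − e^{−x})^k e^{−x(m−k)} · (e^{−x}/(1 − e^{−x})) dx = binom(m,k) · ∫_0^1 x^{k−1}(1 − x)^{m−k} dx = 1/k. Consequently, ∑_{k=1}^m binom(m,k) ∫_{(0,∞)} (1 − e^{−x})^k e^{−x(m−k)} (e^{−x}/(1 − e^{−x})) dx = h_m, and the ratio [binom(m,k) ∫_{(0,∞)} (1 − e^{−x})^k e^{−x(m−k)} ν(dx)] / [∑_{l=1}^m binom(m,l) ∫_{(0,∞)} (1 − e^{−x})^l e^{−x(m−l)} ν(dx)] equals 1/(k h_m).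 -/
open MeasureTheory

/-- The `m`-th harmonic number `h_m = ∑_{j=1}^m 1/j`. -/
noncomputable def harmonicNumber (m : ℕ) : ℝ := ∑ j ∈ Finset.Icc 1 m, (1 : ℝ) / j

lemma fact_mul_prod (k : ℕ) (hk : 1 ≤ k) (n : ℕ) :
    (((k - 1).factorial : ℕ) : ℂ) * ∏ j ∈ Finset.range n, ((k : ℂ) + j) = ((k - 1 + n).factorial : ℕ) := by
  induction n with
  | zero => simp
  | succ n ih =>
    rw [Finset.prod_range_succ, ← mul_assoc, ih]
    have h1 : k - 1 + (n + 1) = (k - 1 + n) + 1 := by omega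
    have h2 : (k : ℂ) + n = ((k - 1 + n + 1 : ℕ) : ℂ) := by
      push_cast [Nat.cast_sub hk]; ring
    rw [h1, Nat.factorial_succ, h2]
    push_cast
    ring

lemma beta_eval (k n : ℕ) (hk : 1 ≤ k) :
    ∫ x in (0 : ℝ)..1, x ^ (k - 1) * (1 - x) ^ n
      = ((n.factorial : ℕ) : ℝ) * ((k - 1).factorial : ℕ) / ((k - 1 + (n + 1)).factorial : ℕ) := by
  have hu : 0 < Complex.re (k : ℂ) := by
    simpa using (by exact_mod_cast hk : (1 : ℝ) ≤ (k : ℝ)).trans_lt' zero_lt_one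
  have hbeta := Complex.betaIntegral_eval_nat_add_one_right (u := (k : ℂ)) (by simpa using hu) n
  have hprod : ∏ j ∈ Finset.range (n + 1), ((k : ℂ) + j) ≠ 0 := by
    refine Finset.prod_ne_zero_iff.2 fun j _ => ?_
    intro h
    have hre := congrArg Complex.re h
    simp only [Complex.add_re, Complex.natCast_re, Complex.zero_re] at hre
    have h1 : (1 : ℝ) ≤ (k : ℝ) := by exact_mod_cast hk
    have h2 : (0 : ℝ) ≤ (j : ℝ) := Nat.cast_nonneg _
    linarith
  have hInt : Complex.betaIntegral (k : ℂ) (n + 1)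
      = ((∫ x in (0 : ℝ)..1, x ^ (k - 1) * (1 - x) ^ n : ℝ) : ℂ) := by
    rw [Complex.betaIntegral, ← intervalIntegral.integral_ofReal]
    refine intervalIntegral.integral_congr fun x _ => ?_
    have e1 : (k : ℂ) - 1 = ((k - 1 : ℕ) : ℂ) := by push_cast [Nat.cast_sub hk]; ring
    have e2 : (n : ℂ) + 1 - 1 = ((n : ℕ) : ℂ) := by ring
    rw [e1, e2, Complex.cpow_natCast, Complex.cpow_natCast]
    push_cast
    ring
  rw [hInt] at hbeta
  have hfact := fact_mul_prod k hk (n + 1)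
  have key : ((∫ x in (0 : ℝ)..1, x ^ (k - 1) * (1 - x) ^ n : ℝ) : ℂ)
      = ((n.factorial * (k - 1).factorial : ℕ) : ℂ)
        / (((k - 1 + (n + 1)).factorial : ℕ) : ℂ) := by
    rw [hbeta, ← hfact]
    have hfne : (((k - 1).factorial : ℕ) : ℂ) ≠ 0 := by
      exact_mod_cast Nat.cast_ne_zero.2 (Nat.factorial_ne_zero _)
    push_cast
    field_simp
  have key2 : (∫ x in (0 : ℝ)..1, x ^ (k - 1) * (1 - x) ^ n)
      = ((n.factorial * (k - 1).factorial : ℕ) : ℝ)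
        / (((k - 1 + (n + 1)).factorial : ℕ) : ℝ) := by
    refine Complex.ofReal_inj.1 (key.trans ?_)
    push_cast
    ring
  rw [key2]
  push_cast
  ring

lemma ioi_eq_beta (m k : ℕ) (hk : 1 ≤ k) (hkm : k ≤ m) :
    (∫ x in Set.Ioi (0 : ℝ),
        (1 - Real.exp (-x)) ^ k * Real.exp (-x * ((m : ℝ) - k))
          * (Real.exp (-x) / (1 - Real.exp (-x))))
      = ∫ x in (0 : ℝ)..1, x ^ (k - 1) * (1 - x) ^ (m - k) := by
  have hderiv : ∀ x ∈ Set.Ioi (0 : ℝ),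
      HasDerivWithinAt (fun x => 1 - Real.exp (-x)) (Real.exp (-x)) (Set.Ioi 0) x := by
    intro x _
    have h : HasDerivAt (fun x : ℝ => Real.exp (-x)) (Real.exp (-x) * (-1)) x :=
      (Real.hasDerivAt_exp (-x)).comp x (hasDerivAt_neg x)
    have h2 : HasDerivWithinAt (fun x => 1 - Real.exp (-x)) (0 - Real.exp (-x) * (-1))
        (Set.Ioi 0) x := ((hasDerivAt_const x (1 : ℝ)).sub h).hasDerivWithinAt
    convert h2 using 1; ring
  have hinj : Set.InjOn (fun x => 1 - Real.exp (-x)) (Set.Ioi (0 : ℝ)) := by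
    intro x _ y _ h
    have : Real.exp (-x) = Real.exp (-y) := by linarith [sub_right_injective h]
    have := Real.exp_injective this
    linarith
  have himg : (fun x => 1 - Real.exp (-x)) '' Set.Ioi (0 : ℝ) = Set.Ioo 0 1 := by
    ext u
    constructor
    · rintro ⟨x, hx, rfl⟩
      have h1 : Real.exp (-x) < 1 := by
        rw [Real.exp_lt_one_iff]; linarith [Set.mem_Ioi.1 hx]
      have h2 : 0 < Real.exp (-x) := Real.exp_pos _
      exact Set.mem_Ioo.2 ⟨by show 0 < 1 - Real.exp (-x); linarith,
        by show 1 - Real.exp (-x) < 1; linarith⟩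
    · rintro ⟨h1, h2⟩
      refine ⟨-Real.log (1 - u), ?_, ?_⟩
      · simp only [Set.mem_Ioi]
        have := Real.log_neg (by linarith : (0:ℝ) < 1 - u) (by linarith)
        linarith
      · simp [Real.exp_log (by linarith : (0:ℝ) < 1 - u)]
  have hcv := integral_image_eq_integral_abs_deriv_smul measurableSet_Ioi hderiv hinj
      (fun u => u ^ (k - 1) * (1 - u) ^ (m - k))
  rw [himg] at hcv
  rw [intervalIntegral.integral_of_le zero_le_one, MeasureTheory.integral_Ioc_eq_integral_Ioo,
    hcv]
  refine setIntegral_congr_fun measurableSet_Ioi fun x hx => ?_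
  have hx0 : (0 : ℝ) < x := hx
  have he1 : Real.exp (-x) < 1 := by rw [Real.exp_lt_one_iff]; linarith
  have hne : (1 : ℝ) - Real.exp (-x) ≠ 0 := by linarith
  have habs : |Real.exp (-x)| = Real.exp (-x) := abs_of_pos (Real.exp_pos _)
  have hcast : (m : ℝ) - k = ((m - k : ℕ) : ℝ) := by push_cast [Nat.cast_sub hkm]; ring
  have hexp : Real.exp (-x * ((m : ℝ) - k)) = Real.exp (-x) ^ (m - k) := by
    rw [hcast, mul_comm, Real.exp_nat_mul]
  have hpow : (1 - Real.exp (-x)) ^ k = (1 - Real.exp (-x)) ^ (k - 1) * (1 - Real.exp (-x)) := by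
    rw [← pow_succ]; congr 1; omega
  simp only [smul_eq_mul, habs, hexp, hpow]
  field_simp
  ring

lemma single_eq (m k : ℕ) (hk : 1 ≤ k) (hkm : k ≤ m) :
    (m.choose k : ℝ) * ∫ x in Set.Ioi (0 : ℝ),
        (1 - Real.exp (-x)) ^ k * Real.exp (-x * ((m : ℝ) - k))
          * (Real.exp (-x) / (1 - Real.exp (-x))) = 1 / k := by
  rw [ioi_eq_beta m k hk hkm, beta_eval _ _ hk]
  have hm : k - 1 + (m - k + 1) = m := by omega
  rw [hm]
  have hfac : m.choose k * k.factorial * (m - k).factorial = m.factorial :=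
    Nat.choose_mul_factorial_mul_factorial hkm
  have hkfac : k * (k - 1).factorial = k.factorial := Nat.mul_factorial_pred (by omega)
  have hmne : (m.factorial : ℝ) ≠ 0 := Nat.cast_ne_zero.2 (Nat.factorial_ne_zero _)
  have hkne : (k : ℝ) ≠ 0 := Nat.cast_ne_zero.2 (by omega)
  have : ((m.choose k : ℕ) : ℝ) * ((m - k).factorial : ℕ) * ((k - 1).factorial : ℕ) * k
      = (m.factorial : ℕ) := by
    exact_mod_cast congrArg (Nat.cast (R := ℝ)) (by rw [← hfac, ← hkfac]; ring)
  field_simp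
  linarith [this]

/-- Transition probabilities of the leaf-count chain (proof of Proposition 2.1), for the
critical Lévy measure `ν(dx) = e^{-x}/(1-e^{-x}) dx`: for `1 ≤ k ≤ m`,
`C(m,k) ∫_{(0,∞)} (1-e^{-x})^k e^{-x(m-k)} ν(dx) = C(m,k) ∫_0^1 x^{k-1}(1-x)^{m-k} dx = 1/k`;
consequently the total rate is `h_m` and the jump probabilities are `1/(k h_m)`. -/
theorem leaf_count_chain_transition_probabilities (m k : ℕ) (hk : 1 ≤ k) (hkm : k ≤ m) :
    ((m.choose k : ℝ) * ∫ x in Set.Ioi (0 : ℝ),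
        (1 - Real.exp (-x)) ^ k * Real.exp (-x * ((m : ℝ) - k))
          * (Real.exp (-x) / (1 - Real.exp (-x)))
      = (m.choose k : ℝ) * ∫ x in (0 : ℝ)..1, x ^ (k - 1) * (1 - x) ^ (m - k)) ∧
    ((m.choose k : ℝ) * ∫ x in Set.Ioi (0 : ℝ),
        (1 - Real.exp (-x)) ^ k * Real.exp (-x * ((m : ℝ) - k))
          * (Real.exp (-x) / (1 - Real.exp (-x)))
      = 1 / k) ∧
    (∑ l ∈ Finset.Icc 1 m, (m.choose l : ℝ) * ∫ x in Set.Ioi (0 : ℝ),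
        (1 - Real.exp (-x)) ^ l * Real.exp (-x * ((m : ℝ) - l))
          * (Real.exp (-x) / (1 - Real.exp (-x)))
      = harmonicNumber m) ∧
    (((m.choose k : ℝ) * ∫ x in Set.Ioi (0 : ℝ),
        (1 - Real.exp (-x)) ^ k * Real.exp (-x * ((m : ℝ) - k))
          * (Real.exp (-x) / (1 - Real.exp (-x))))
      / (∑ l ∈ Finset.Icc 1 m, (m.choose l : ℝ) * ∫ x in Set.Ioi (0 : ℝ),
          (1 - Real.exp (-x)) ^ l * Real.exp (-x * ((m : ℝ) - l))
            * (Real.exp (-x) / (1 - Real.exp (-x))))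
      = 1 / (k * harmonicNumber m)) := by
  have hsum : ∑ l ∈ Finset.Icc 1 m, (m.choose l : ℝ) * ∫ x in Set.Ioi (0 : ℝ),
        (1 - Real.exp (-x)) ^ l * Real.exp (-x * ((m : ℝ) - l))
          * (Real.exp (-x) / (1 - Real.exp (-x))) = harmonicNumber m := by
    rw [harmonicNumber]
    refine Finset.sum_congr rfl fun l hl => ?_
    obtain ⟨h1, h2⟩ := Finset.mem_Icc.1 hl
    exact single_eq m l h1 h2
  refine ⟨by rw [ioi_eq_beta m k hk hkm], single_eq m k hk hkm, hsum, ?_⟩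
  rw [single_eq m k hk hkm, hsum, div_div]
end

section
/- Logarithmic integral asymptotics of the centering (used to pass from Theorem 2.2 to Theorem 1.2): with Φ(t) = ∫_0^t (1 − e^{−y})/y dy, the quantity ∫_1^n y^{-1} Φ(y) dy − (log n)²/2 − γ·log n converges to a finite limit as n → ∞, where γ is the Euler–Mascheroni constant; in particular ∫_1^n y^{-1} Φ(y) dy = (log n)²/2 + γ log n + o(log n) as n → ∞. -/
open Filter MeasureTheory Set

noncomputable def Phi (t : ℝ) : ℝ := ∫ u in (0:ℝ)..t, (1 - Real.exp (-u)) / u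

noncomputable def Efn (y : ℝ) : ℝ := ∫ t in Ioi y, Real.exp (-t) / t

lemma f_nonneg {u : ℝ} (hu : 0 < u) : 0 ≤ (1 - Real.exp (-u)) / u := by
  apply div_nonneg _ hu.le
  simp [Real.exp_le_one_iff.mpr (by linarith : -u ≤ 0)]

lemma f_le_one {u : ℝ} (hu : 0 < u) : (1 - Real.exp (-u)) / u ≤ 1 := by
  rw [div_le_one hu]
  have := Real.add_one_le_exp (-u)
  linarith

lemma f_meas : Measurable (fun u : ℝ => (1 - Real.exp (-u)) / u) :=
  (measurable_const.sub (Real.measurable_exp.comp measurable_neg)).div measurable_id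

lemma f_contAt {u : ℝ} (hu : u ≠ 0) :
    ContinuousAt (fun u : ℝ => (1 - Real.exp (-u)) / u) u :=
  (continuousAt_const.sub (Real.continuous_exp.continuousAt.comp
    (continuous_neg.continuousAt))).div continuousAt_id hu

lemma f_integrableOn {a : ℝ} (ha : 0 ≤ a) :
    IntegrableOn (fun u : ℝ => (1 - Real.exp (-u)) / u) (Ioc 0 a) := by
  apply Measure.integrableOn_of_bounded (M := 1)
  · exact (measure_Ioc_lt_top).ne
  · exact f_meas.aestronglyMeasurable
  · filter_upwards [ae_restrict_mem measurableSet_Ioc] with x hx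
    rw [Real.norm_eq_abs, abs_of_nonneg (f_nonneg hx.1)]
    exact f_le_one hx.1

lemma f_intervalIntegrable {a b : ℝ} (ha : 0 ≤ a) (hab : a ≤ b) :
    IntervalIntegrable (fun u : ℝ => (1 - Real.exp (-u)) / u) volume a b := by
  rw [intervalIntegrable_iff_integrableOn_Ioc_of_le hab]
  exact (f_integrableOn (ha.trans hab)).mono_set (Ioc_subset_Ioc ha le_rfl)

lemma Phi_abs_le {t : ℝ} (ht : 0 ≤ t) : |Phi t| ≤ t := by
  have h : ∀ x ∈ uIoc (0:ℝ) t, ‖(1 - Real.exp (-x)) / x‖ ≤ 1 := by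
    intro x hx
    rw [uIoc_of_le ht] at hx
    rw [Real.norm_eq_abs, abs_of_nonneg (f_nonneg hx.1)]
    exact f_le_one hx.1
  have := intervalIntegral.norm_integral_le_of_norm_le_const h
  simpa [Phi, abs_of_nonneg ht] using this

lemma gamma_int : ∫ t in Ioi (0:ℝ), Real.exp (-t) * Real.log t = -Real.eulerMascheroniConstant := by
  have h := Complex.hasDerivAt_GammaIntegral (s := 1) (by norm_num)
  have h1 : HasDerivAt Complex.GammaIntegral
      ((∫ t : ℝ in Ioi (0:ℝ), Real.exp (-t) * Real.log t : ℝ) : ℂ) 1 := by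
    convert h using 1
    rw [show (1:ℂ) - 1 = 0 by ring]
    simp only [Complex.cpow_zero, one_mul]
    norm_cast
    have hco : (∫ t in Ioi (0:ℝ), ((Real.log t * Real.exp (-t) : ℝ) : ℂ))
        = ↑(∫ t in Ioi (0:ℝ), Real.log t * Real.exp (-t)) := integral_ofReal
    exact integral_congr_ae (Eventually.of_forall fun t => mul_comm _ _)
  have heq : Complex.Gamma =ᶠ[nhds (1:ℂ)] Complex.GammaIntegral := by
    have hopen : IsOpen {s : ℂ | 0 < s.re} := isOpen_lt continuous_const Complex.continuous_re
    filter_upwards [hopen.mem_nhds (by norm_num : 0 < (1:ℂ).re)] with s hs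
    exact Complex.Gamma_eq_integral hs
  have h2 : HasDerivAt Complex.Gamma
      ((∫ t : ℝ in Ioi (0:ℝ), Real.exp (-t) * Real.log t : ℝ) : ℂ) 1 :=
    h1.congr_of_eventuallyEq heq
  have h3 := h2.comp_ofReal (z := 1)
  have h4 : HasDerivAt (fun y : ℝ => ((Real.Gamma y : ℂ)))
      ((-Real.eulerMascheroniConstant : ℝ) : ℂ) 1 := by
    exact_mod_cast Real.hasDerivAt_Gamma_one.ofReal_comp
  have h5 : (fun y : ℝ => Complex.Gamma (y : ℂ)) = fun y : ℝ => ((Real.Gamma y : ℂ)) := by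
    funext y; exact Complex.Gamma_ofReal y
  rw [h5] at h3
  exact_mod_cast h3.unique h4

/-- `x * exp (-x)` is integrable on `Ioi 1`. -/
lemma aux_integrable : IntegrableOn (fun x : ℝ => x * Real.exp (-x)) (Ioi 1) := by
  have h2 : IntegrableOn (fun x : ℝ => Real.exp (-x) * x ^ ((1:ℝ))) (Ioi 1) := by
    have h := (Real.GammaIntegral_convergent (s := 2) (by norm_num)).mono_set
      (Ioi_subset_Ioi zero_le_one)
    have he : ((2:ℝ) - 1) = (1:ℝ) := by norm_num
    rwa [he] at h
  apply h2.congr_fun ?_ measurableSet_Ioi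
  intro x hx
  simp [Real.rpow_one, mul_comm]

lemma intlog_Ioi : IntegrableOn (fun t : ℝ => Real.exp (-t) * Real.log t) (Ioi 1) := by
  refine Integrable.mono aux_integrable ?_ ?_
  · apply ContinuousOn.aestronglyMeasurable ?_ measurableSet_Ioi
    intro x hx
    exact ((Real.continuous_exp.comp continuous_neg).continuousAt.mul
      (Real.continuousAt_log (by have : (1:ℝ) < x := hx; linarith))).continuousWithinAt
  · filter_upwards [ae_restrict_mem measurableSet_Ioi] with x hx
    have hx1 : (1:ℝ) < x := hx
    have hl0 : 0 ≤ Real.log x := Real.log_nonneg hx1.le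
    have hlx : Real.log x ≤ x := (Real.log_le_sub_one_of_pos (by linarith)).trans (by linarith)
    rw [Real.norm_eq_abs, Real.norm_eq_abs, abs_of_nonneg (by positivity),
      abs_of_nonneg (by positivity)]
    rw [mul_comm (x : ℝ)]
    exact mul_le_mul_of_nonneg_left hlx (Real.exp_nonneg _)

lemma intg_Ioi {a : ℝ} (ha : 1 ≤ a) : IntegrableOn (fun t : ℝ => Real.exp (-t) / t) (Ioi a) := by
  have h : IntegrableOn (fun x : ℝ => Real.exp (-1 * x)) (Ioi a) :=
    exp_neg_integrableOn_Ioi a one_pos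
  have h' : IntegrableOn (fun x : ℝ => Real.exp (-x)) (Ioi a) := by
    apply h.congr_fun ?_ measurableSet_Ioi
    intro x _
    norm_num
  refine Integrable.mono h' ?_ ?_
  · apply ContinuousOn.aestronglyMeasurable ?_ measurableSet_Ioi
    intro x hx
    have hx1 : a < x := hx
    have hxpos : (0:ℝ) < x := by linarith
    exact ((Real.continuous_exp.comp continuous_neg).continuousAt.div
      continuousAt_id (ne_of_gt hxpos)).continuousWithinAt
  · filter_upwards [ae_restrict_mem measurableSet_Ioi] with x hx
    have hx1 : a < x := hx
    have hxpos : (0:ℝ) < x := by linarith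
    rw [Real.norm_eq_abs, Real.norm_eq_abs, abs_of_nonneg (by positivity),
      abs_of_nonneg (Real.exp_nonneg _)]
    exact div_le_self (Real.exp_nonneg _) (by linarith)

/-- Integration by parts on `(1, ∞)`. -/
lemma parts_top :
    ∫ t in Ioi (1:ℝ), Real.exp (-t) * Real.log t = ∫ t in Ioi (1:ℝ), Real.exp (-t) / t := by
  have key : ∫ x in Ioi (1:ℝ),
      (Real.exp (-x) * Real.log x + (-Real.exp (-x)) * x⁻¹) = 0 - 0 := by
    apply integral_Ioi_deriv_mul_eq_sub
      (u := fun t => -Real.exp (-t)) (v := Real.log)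
      (u' := fun t => Real.exp (-t)) (v' := fun t => t⁻¹)
    · intro x hx
      have : HasDerivAt (fun t : ℝ => Real.exp (-t)) (Real.exp (-x) * (-1)) x :=
        (hasDerivAt_neg x).exp
      simpa using this.fun_neg
    · intro x hx
      exact Real.hasDerivAt_log (by have : (1:ℝ) < x := hx; linarith)
    · have : (fun x : ℝ => Real.exp (-x) * Real.log x) + (fun x : ℝ => (-Real.exp (-x)) * x⁻¹)
          = fun x : ℝ => Real.exp (-x) * Real.log x + (-Real.exp (-x)) * x⁻¹ := rfl
      apply Integrable.add intlog_Ioi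
      apply IntegrableOn.congr_fun ((intg_Ioi le_rfl).neg) ?_ measurableSet_Ioi
      intro x _
      simp only [Pi.mul_apply, Pi.neg_apply]
      rw [div_eq_mul_inv]
      ring
    · have hc : ContinuousAt (fun x : ℝ => -Real.exp (-x) * Real.log x) 1 :=
        ((Real.continuous_exp.comp continuous_neg).continuousAt.neg).mul
          (Real.continuousAt_log one_ne_zero)
      have ht := hc.tendsto
      simp only [Real.log_one, mul_zero] at ht
      exact ht.mono_left nhdsWithin_le_nhds
    · apply squeeze_zero_norm' (a := fun x : ℝ => x * Real.exp (-x))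
      · filter_upwards [eventually_ge_atTop (1:ℝ)] with x hx
        have hl0 : 0 ≤ Real.log x := Real.log_nonneg hx
        have hlx : Real.log x ≤ x := (Real.log_le_sub_one_of_pos (by linarith)).trans (by linarith)
        show ‖-Real.exp (-x) * Real.log x‖ ≤ x * Real.exp (-x)
        rw [norm_mul, norm_neg, Real.norm_eq_abs, Real.norm_eq_abs,
          abs_of_nonneg (Real.exp_nonneg _), abs_of_nonneg hl0]
        calc Real.exp (-x) * Real.log x ≤ Real.exp (-x) * x :=
              mul_le_mul_of_nonneg_left hlx (Real.exp_nonneg _)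
          _ = x * Real.exp (-x) := mul_comm _ _
      · exact (Real.tendsto_pow_mul_exp_neg_atTop_nhds_zero 1).congr (fun x => by rw [pow_one])
  rw [sub_zero] at key
  have h2 : ∫ x in Ioi (1:ℝ), (Real.exp (-x) * Real.log x + (-Real.exp (-x)) * x⁻¹)
      = (∫ x in Ioi (1:ℝ), Real.exp (-x) * Real.log x)
        - ∫ x in Ioi (1:ℝ), Real.exp (-x) / x := by
    rw [show (fun x : ℝ => Real.exp (-x) * Real.log x + (-Real.exp (-x)) * x⁻¹)
        = (fun x : ℝ => Real.exp (-x) * Real.log x - Real.exp (-x) / x) by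
      funext x; rw [div_eq_mul_inv]; ring]
    exact integral_sub intlog_Ioi (intg_Ioi le_rfl)
  rw [h2] at key
  linarith

/-- `exp(-t) log t` is interval integrable on `[0,1]`. -/
lemma int_log_01 : IntervalIntegrable (fun t : ℝ => Real.exp (-t) * Real.log t) volume 0 1 := by
  have hg : IntervalIntegrable (fun t : ℝ => 2 * t ^ (-(1/2) : ℝ)) volume 0 1 :=
    (intervalIntegral.intervalIntegrable_rpow' (by norm_num)).const_mul 2
  apply hg.mono_fun
  · apply ContinuousOn.aestronglyMeasurable ?_ measurableSet_uIoc
    intro x hx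
    rw [uIoc_of_le (zero_le_one' ℝ)] at hx
    exact ((Real.continuous_exp.comp continuous_neg).continuousAt.mul
      (Real.continuousAt_log (ne_of_gt hx.1))).continuousWithinAt
  · filter_upwards [ae_restrict_mem measurableSet_uIoc] with x hx
    rw [uIoc_of_le (zero_le_one' ℝ)] at hx
    obtain ⟨hx0, hx1⟩ := hx
    have hrp : (0:ℝ) < x ^ (-(1/2) : ℝ) := Real.rpow_pos_of_pos hx0 _
    rw [Real.norm_eq_abs, Real.norm_eq_abs, abs_mul, abs_of_nonneg (Real.exp_nonneg _),
      abs_of_nonneg (by positivity : (0:ℝ) ≤ 2 * x ^ (-(1/2) : ℝ))]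
    have h1 : Real.exp (-x) ≤ 1 := Real.exp_le_one_iff.mpr (by linarith)
    have h2 : |Real.log x| ≤ 2 * x ^ (-(1/2) : ℝ) := by
      rw [abs_of_nonpos (Real.log_nonpos hx0.le hx1)]
      have hlog : Real.log (x ^ (-(1/2) : ℝ)) = -(1/2) * Real.log x :=
        Real.log_rpow hx0 _
      have hle : Real.log (x ^ (-(1/2) : ℝ)) ≤ x ^ (-(1/2) : ℝ) - 1 :=
        Real.log_le_sub_one_of_pos hrp
      rw [hlog] at hle
      linarith
    calc Real.exp (-x) * |Real.log x| ≤ 1 * |Real.log x| :=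
          mul_le_mul_of_nonneg_right h1 (abs_nonneg _)
      _ = |Real.log x| := one_mul _
      _ ≤ 2 * x ^ (-(1/2) : ℝ) := h2

/-- Integration by parts on `(0,1]`. -/
lemma parts_zero : ∫ t in (0:ℝ)..1, Real.exp (-t) * Real.log t = -Phi 1 := by
  set G : ℝ → ℝ := fun t => (1 - Real.exp (-t)) * Real.log t - Phi t with hG
  have hG0 : G 0 = 0 := by simp [hG, Phi]
  have hG1 : G 1 = -Phi 1 := by simp [hG]
  have key : ∫ t in (0:ℝ)..1, Real.exp (-t) * Real.log t = G 1 - G 0 := by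
    apply intervalIntegral.integral_eq_sub_of_hasDeriv_right_of_le zero_le_one
    · -- continuity of G on Icc 0 1
      apply ContinuousOn.sub
      · -- (1 - exp(-t)) * log t
        intro x hx
        rcases eq_or_ne x 0 with rfl | hx0
        · rw [ContinuousWithinAt]
          have htend : Tendsto (fun t : ℝ => (1 - Real.exp (-t)) * Real.log t)
              (nhdsWithin 0 (Icc 0 1)) (nhds 0) := by
            apply squeeze_zero_norm' (a := fun t : ℝ => 2 * Real.sqrt t)
            · filter_upwards [self_mem_nhdsWithin] with t ht
              obtain ⟨ht0, ht1⟩ := ht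
              rcases eq_or_lt_of_le ht0 with rfl | htpos
              · simp
              · show ‖(1 - Real.exp (-t)) * Real.log t‖ ≤ 2 * Real.sqrt t
                rw [norm_mul, Real.norm_eq_abs, Real.norm_eq_abs]
                have hexp1 : Real.exp (-t) ≤ 1 := Real.exp_le_one_iff.mpr (by linarith)
                have hexp2 : 1 - t ≤ Real.exp (-t) := by
                  have := Real.add_one_le_exp (-t); linarith
                rw [abs_of_nonneg (by linarith)]
                have hlog : |Real.log t| ≤ 2 / Real.sqrt t := by
                  rw [abs_of_nonpos (Real.log_nonpos htpos.le ht1)]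
                  have hsq : (0:ℝ) < Real.sqrt t := Real.sqrt_pos.mpr htpos
                  have h2 : Real.log (Real.sqrt t) = Real.log t / 2 := Real.log_sqrt ht0
                  have h3 : Real.log (Real.sqrt t)⁻¹ ≤ (Real.sqrt t)⁻¹ - 1 :=
                    Real.log_le_sub_one_of_pos (by positivity)
                  rw [Real.log_inv, h2] at h3
                  have h4 : (0:ℝ) ≤ (Real.sqrt t)⁻¹ := by positivity
                  rw [div_eq_mul_inv]
                  linarith
                have hsq : (0:ℝ) < Real.sqrt t := Real.sqrt_pos.mpr htpos
                calc (1 - Real.exp (-t)) * |Real.log t| ≤ t * (2 / Real.sqrt t) := by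
                      apply mul_le_mul (by linarith) hlog (abs_nonneg _) ht0
                  _ = 2 * (t / Real.sqrt t) := by ring
                  _ = 2 * Real.sqrt t := by rw [Real.div_sqrt]
            · have hc : ContinuousWithinAt (fun t : ℝ => 2 * Real.sqrt t) (Icc 0 1) 0 :=
                (continuous_const.mul Real.continuous_sqrt).continuousWithinAt
              have := hc.tendsto
              simpa using this
          simpa using htend
        · exact ((continuousAt_const.sub ((Real.continuous_exp.comp
            continuous_neg).continuousAt)).mul (Real.continuousAt_log hx0)).continuousWithinAt
      · -- Phi continuous on Icc 0 1
        have h := intervalIntegral.continuousOn_primitive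
          (f := fun u : ℝ => (1 - Real.exp (-u)) / u) (a := 0) (b := 1) (μ := volume)
          (by rw [integrableOn_Icc_iff_integrableOn_Ioc]; exact f_integrableOn zero_le_one)
        apply h.congr
        intro x hx
        rw [Phi, intervalIntegral.integral_of_le hx.1]
    · intro x hx
      obtain ⟨hx0, hx1⟩ := hx
      have hA : HasDerivAt (fun t : ℝ => 1 - Real.exp (-t)) (Real.exp (-x)) x := by
        have h : HasDerivAt (fun t : ℝ => Real.exp (-t)) (Real.exp (-x) * (-1)) x :=
          (hasDerivAt_neg x).exp
        simpa using (hasDerivAt_const x (1:ℝ)).fun_sub h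
      have hB : HasDerivAt Real.log x⁻¹ x := Real.hasDerivAt_log (ne_of_gt hx0)
      have hAB := hA.fun_mul hB
      have hPhi : HasDerivAt Phi ((1 - Real.exp (-x)) / x) x := by
        apply intervalIntegral.integral_hasDerivAt_right
          (f_intervalIntegrable le_rfl hx0.le)
          (f_meas.stronglyMeasurable.stronglyMeasurableAtFilter)
          (f_contAt (ne_of_gt hx0))
      have hres := hAB.fun_sub hPhi
      have hG' : HasDerivAt G (Real.exp (-x) * Real.log x) x := by
        refine hres.congr_deriv ?_
        rw [div_eq_mul_inv]
        ring
      exact hG'.hasDerivWithinAt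
    · exact int_log_01
  rw [key, hG1, hG0, sub_zero]

lemma gamma_eq : Real.eulerMascheroniConstant = Phi 1 - ∫ t in Ioi (1:ℝ), Real.exp (-t) / t := by
  have hsplit : ∫ t in Ioi (0:ℝ), Real.exp (-t) * Real.log t
      = (∫ t in Ioc (0:ℝ) 1, Real.exp (-t) * Real.log t)
        + ∫ t in Ioi (1:ℝ), Real.exp (-t) * Real.log t := by
    rw [← setIntegral_union (Ioc_disjoint_Ioi le_rfl) measurableSet_Ioi ?_ intlog_Ioi,
      Ioc_union_Ioi_eq_Ioi zero_le_one]
    rw [← intervalIntegrable_iff_integrableOn_Ioc_of_le zero_le_one]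
    exact int_log_01
  have h01 : ∫ t in Ioc (0:ℝ) 1, Real.exp (-t) * Real.log t = -Phi 1 := by
    rw [← intervalIntegral.integral_of_le zero_le_one]
    exact parts_zero
  rw [gamma_int, h01, parts_top] at hsplit
  linarith

lemma E_eq {y : ℝ} (hy : 1 ≤ y) :
    Efn y = Efn 1 - ∫ t in (1:ℝ)..y, Real.exp (-t) / t := by
  have hsplit : Efn 1 = (∫ t in Ioc (1:ℝ) y, Real.exp (-t) / t) + Efn y := by
    rw [Efn, Efn, ← setIntegral_union (Ioc_disjoint_Ioi le_rfl) measurableSet_Ioi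
      ((intg_Ioi le_rfl).mono_set Ioc_subset_Ioi_self) (intg_Ioi hy),
      Ioc_union_Ioi_eq_Ioi hy]
  rw [intervalIntegral.integral_of_le hy]
  linarith

lemma g_contAt {x : ℝ} (hx : 0 < x) : ContinuousAt (fun t : ℝ => Real.exp (-t) / t) x :=
  ((Real.continuous_exp.comp continuous_neg).continuousAt.div
    continuousAt_id (ne_of_gt hx))

lemma g_intervalIntegrable {a b : ℝ} (ha : 0 < a) (hb : 0 < b) :
    IntervalIntegrable (fun t : ℝ => Real.exp (-t) / t) volume a b := by
  apply ContinuousOn.intervalIntegrable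
  intro x hx
  have hxpos : 0 < x := lt_of_lt_of_le (lt_min ha hb) hx.1
  exact (g_contAt hxpos).continuousWithinAt

lemma Phi_eq {y : ℝ} (hy : 1 ≤ y) :
    Phi y = Real.log y + Real.eulerMascheroniConstant + Efn y := by
  have hy0 : (0:ℝ) < y := lt_of_lt_of_le one_pos hy
  have hadd : Phi 1 + (∫ u in (1:ℝ)..y, (1 - Real.exp (-u)) / u) = Phi y := by
    rw [Phi, Phi]
    exact intervalIntegral.integral_add_adjacent_intervals
      (f_intervalIntegrable le_rfl zero_le_one) (f_intervalIntegrable zero_le_one hy)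
  have hfg : ∫ u in (1:ℝ)..y, (1 - Real.exp (-u)) / u
      = Real.log y - ∫ u in (1:ℝ)..y, Real.exp (-u) / u := by
    have h1 : ∫ u in (1:ℝ)..y, (1 - Real.exp (-u)) / u
        = (∫ u in (1:ℝ)..y, u⁻¹) - ∫ u in (1:ℝ)..y, Real.exp (-u) / u := by
      rw [← intervalIntegral.integral_sub ?_ (g_intervalIntegrable one_pos hy0)]
      · apply intervalIntegral.integral_congr
        intro x hx
        rw [uIcc_of_le hy] at hx
        have hx0 : 0 < x := lt_of_lt_of_le one_pos hx.1
        field_simp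
      · apply ContinuousOn.intervalIntegrable
        intro x hx
        rw [uIcc_of_le hy] at hx
        exact (continuousAt_inv₀ (ne_of_gt (lt_of_lt_of_le one_pos hx.1))).continuousWithinAt
    rw [h1, integral_inv_of_pos one_pos hy0, div_one]
  rw [← hadd, hfg, E_eq hy, gamma_eq]
  simp only [Efn]
  ring

lemma E_contOn : ContinuousOn Efn (Ici 1) := by
  have hP : ContinuousOn (fun y : ℝ => Efn 1 - ∫ t in (1:ℝ)..y, Real.exp (-t) / t) (Ici 1) := by
    apply continuousOn_const.sub
    intro y hy
    have hy0 : (0:ℝ) < y := lt_of_lt_of_le one_pos hy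
    have hd : HasDerivAt (fun y : ℝ => ∫ t in (1:ℝ)..y, Real.exp (-t) / t)
        (Real.exp (-y) / y) y := by
      apply intervalIntegral.integral_hasDerivAt_right (g_intervalIntegrable one_pos hy0)
      · exact ((Real.measurable_exp.comp measurable_neg).div
          measurable_id).stronglyMeasurable.stronglyMeasurableAtFilter
      · exact g_contAt hy0
    exact hd.continuousAt.continuousWithinAt
  exact ContinuousOn.congr hP (fun y hy => E_eq hy)

lemma hEdiv_cont : ContinuousOn (fun y : ℝ => Efn y / y) (Ici 1) := by
  intro y hy
  have hy0 : (0:ℝ) < y := lt_of_lt_of_le one_pos hy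
  exact (E_contOn y hy).div continuousWithinAt_id (ne_of_gt hy0)

lemma E_nonneg {y : ℝ} (hy : 1 ≤ y) : 0 ≤ Efn y := by
  apply setIntegral_nonneg measurableSet_Ioi
  intro x hx
  have hx0 : (0:ℝ) < x := lt_of_le_of_lt (le_trans zero_le_one hy) hx
  positivity

lemma E_le {y : ℝ} (hy : 1 ≤ y) : Efn y ≤ Real.exp (-y) := by
  have hexp : IntegrableOn (fun x : ℝ => Real.exp (-x)) (Ioi y) := by
    apply (exp_neg_integrableOn_Ioi y one_pos).congr_fun ?_ measurableSet_Ioi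
    intro x _; norm_num
  have h1 : Efn y ≤ ∫ t in Ioi y, Real.exp (-t) := by
    apply setIntegral_mono_on (intg_Ioi hy) hexp measurableSet_Ioi
    intro x hx
    have hx1 : y < x := hx
    exact div_le_self (Real.exp_nonneg _) (by linarith)
  rwa [integral_exp_neg_Ioi] at h1

lemma h_integrable : IntegrableOn (fun y : ℝ => Efn y / y) (Ioi 1) := by
  have hexp : IntegrableOn (fun y : ℝ => Real.exp (-y)) (Ioi 1) := by
    apply (exp_neg_integrableOn_Ioi 1 one_pos).congr_fun ?_ measurableSet_Ioi
    intro x _; norm_num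
  refine Integrable.mono hexp ?_ ?_
  · exact ContinuousOn.aestronglyMeasurable
      (hEdiv_cont.mono (Ioi_subset_Ici le_rfl)) measurableSet_Ioi
  · filter_upwards [ae_restrict_mem measurableSet_Ioi] with x hx
    have hx1 : (1:ℝ) < x := hx
    have hE0 := E_nonneg hx1.le
    have hEle := E_le hx1.le
    rw [Real.norm_eq_abs, Real.norm_eq_abs, abs_of_nonneg (by positivity),
      abs_of_nonneg (Real.exp_nonneg _)]
    calc Efn x / x ≤ Efn x := div_le_self hE0 hx1.le
      _ ≤ Real.exp (-x) := hEle

lemma main_formula {x : ℝ} (hx : 1 ≤ x) :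
    ∫ y in (1:ℝ)..x, Phi y / y
      = (Real.log x) ^ 2 / 2 + Real.eulerMascheroniConstant * Real.log x
        + ∫ y in (1:ℝ)..x, Efn y / y := by
  have hx0 : (0:ℝ) < x := lt_of_lt_of_le one_pos hx
  have hcongr : ∫ y in (1:ℝ)..x, Phi y / y
      = ∫ y in (1:ℝ)..x,
          (Real.log y * y⁻¹ + Real.eulerMascheroniConstant * y⁻¹ + Efn y / y) := by
    apply intervalIntegral.integral_congr
    intro y hy
    rw [uIcc_of_le hx] at hy
    have hy0 : (0:ℝ) < y := lt_of_lt_of_le one_pos hy.1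
    show Phi y / y = Real.log y * y⁻¹ + Real.eulerMascheroniConstant * y⁻¹ + Efn y / y
    rw [Phi_eq hy.1]
    field_simp
  have hint1 : IntervalIntegrable (fun y : ℝ => Real.log y * y⁻¹) volume 1 x := by
    apply ContinuousOn.intervalIntegrable
    intro y hy
    rw [uIcc_of_le hx] at hy
    have hy0 : (0:ℝ) < y := lt_of_lt_of_le one_pos hy.1
    exact ((Real.continuousAt_log (ne_of_gt hy0)).mul
      (continuousAt_inv₀ (ne_of_gt hy0))).continuousWithinAt
  have hint2 : IntervalIntegrable
      (fun y : ℝ => Real.eulerMascheroniConstant * y⁻¹) volume 1 x := by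
    apply ContinuousOn.intervalIntegrable
    intro y hy
    rw [uIcc_of_le hx] at hy
    have hy0 : (0:ℝ) < y := lt_of_lt_of_le one_pos hy.1
    exact (continuousAt_const.mul (continuousAt_inv₀ (ne_of_gt hy0))).continuousWithinAt
  have hint3 : IntervalIntegrable (fun y : ℝ => Efn y / y) volume 1 x :=
    ContinuousOn.intervalIntegrable
      (hEdiv_cont.mono (by rw [uIcc_of_le hx]; exact Icc_subset_Ici_self))
  have hlogint : ∫ y in (1:ℝ)..x, Real.log y * y⁻¹ = (Real.log x) ^ 2 / 2 := by
    have hF : ∀ y ∈ uIcc (1:ℝ) x, HasDerivAt (fun t => (Real.log t) ^ 2 / 2)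
        (Real.log y * y⁻¹) y := by
      intro y hy
      rw [uIcc_of_le hx] at hy
      have hy0 : (0:ℝ) < y := lt_of_lt_of_le one_pos hy.1
      have h := ((Real.hasDerivAt_log (ne_of_gt hy0)).fun_pow 2).div_const 2
      refine h.congr_deriv ?_
      ring
    rw [intervalIntegral.integral_eq_sub_of_hasDerivAt hF hint1]
    simp
  have hconstint : ∫ y in (1:ℝ)..x, Real.eulerMascheroniConstant * y⁻¹
      = Real.eulerMascheroniConstant * Real.log x := by
    rw [intervalIntegral.integral_const_mul, integral_inv_of_pos one_pos hx0, div_one]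
  rw [hcongr, intervalIntegral.integral_add (hint1.add hint2) hint3,
    intervalIntegral.integral_add hint1 hint2, hlogint, hconstint]

/-- Logarithmic integral asymptotics of the centering: with
`Φ(t) = ∫_0^t (1-e^{-y})/y dy`, the quantity
`∫_1^n Φ(y)/y dy - (log n)²/2 - γ log n` converges to a finite limit as `n → ∞`
(`γ` the Euler–Mascheroni constant); in particular
`∫_1^n Φ(y)/y dy = (log n)²/2 + γ log n + o(log n)`. -/
theorem centering_integral_asymptotics :
    ∃ L : ℝ, Tendsto (fun n : ℕ =>
        (∫ y in (1 : ℝ)..(n : ℝ),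
          (∫ u in (0 : ℝ)..y, (1 - Real.exp (-u)) / u) / y)
        - (Real.log n) ^ 2 / 2 - Real.eulerMascheroniConstant * Real.log n)
      atTop (nhds L) := by
  refine ⟨∫ y in Ioi (1:ℝ), Efn y / y, ?_⟩
  have ht : Tendsto (fun n : ℕ => ∫ y in (1:ℝ)..(n:ℝ), Efn y / y) atTop
      (nhds (∫ y in Ioi (1:ℝ), Efn y / y)) :=
    intervalIntegral_tendsto_integral_Ioi 1 h_integrable tendsto_natCast_atTop_atTop
  apply ht.congr'
  filter_upwards [eventually_ge_atTop 1] with n hn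
  have hn1 : (1:ℝ) ≤ (n:ℝ) := by exact_mod_cast hn
  have hmf := main_formula hn1
  show (∫ y in (1:ℝ)..(n:ℝ), Efn y / y)
      = (∫ y in (1:ℝ)..(n:ℝ), Phi y / y)
        - (Real.log n) ^ 2 / 2 - Real.eulerMascheroniConstant * Real.log n
  rw [hmf]
  ring
end
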